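/- arXiv:2503.23651 — 3 statements merged into one kernel-verified Lean document; each statement's English description precedes it below -/
import Mathlib

section
/- Every continuous map f : (I², ∂I²) → (|X|, x₀) admits, for some sufficiently large m, a simplicial approximation g : (I_{m,m}, ∂I_{m,m}) → (X, x₀); consequently f is homotopic relative the boundary to the realization |g|. -/
structure ASC (V : Type) where
  faces : Set (Finset V)
  down_closed : ∀ ⦃s t : Finset V⦄, s ∈ faces → t ⊆ s → t ∈ faces

variable {U V W : Type}

/-- A vertex map is a simplicial map if it sends every simplex to a simplex. -/
def IsSimplicialMap [DecidableEq W] (K : ASC V) (L : ASC W) (f : V → W) : Prop :=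
  ∀ s ∈ K.faces, s.image f ∈ L.faces

/-- Two maps are contiguous if `f(σ) ∪ g(σ)` is a simplex for every simplex `σ`. -/
def Contiguous [DecidableEq W] (K : ASC V) (L : ASC W) (f g : V → W) : Prop :=
  ∀ s ∈ K.faces, s.image f ∪ s.image g ∈ L.faces

/-- Contiguity equivalence: a finite chain of contiguities through simplicial maps. -/
def ContigEquiv [DecidableEq W] (K : ASC V) (L : ASC W) : (V → W) → (V → W) → Prop :=
  Relation.ReflTransGen (fun a b =>
    IsSimplicialMap K L a ∧ IsSimplicialMap K L b ∧ Contiguous K L a b)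

/-- The categorical product of simplicial complexes. -/
def ASC.prod [DecidableEq V] [DecidableEq W] (K : ASC V) (L : ASC W) : ASC (V × W) where
  faces := {s | s.image Prod.fst ∈ K.faces ∧ s.image Prod.snd ∈ L.faces}
  down_closed := fun _s _t hs hts =>
    ⟨K.down_closed hs.1 (Finset.image_subset_image hts),
     L.down_closed hs.2 (Finset.image_subset_image hts)⟩

/-- The simplicial interval `I_m` on vertices `0, …, m`. -/
def interval (m : ℕ) : ASC ℕ where
  faces := {s | (∀ x ∈ s, x ≤ m) ∧ ∀ x ∈ s, ∀ y ∈ s, x ≤ y + 1}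
  down_closed := fun _s _t hs hts =>
    ⟨fun x hx => hs.1 x (hts hx), fun x hx y hy => hs.2 x (hts hx) y (hts hy)⟩

/-- The vertex map of `α_i : I_{m+1} → I_m`. -/
def alpha (i : ℕ) : ℕ → ℕ := fun s => if s ≤ i then s else s - 1

/-- The categorical product `I_m × I_n`. -/
def prodInterval (m n : ℕ) : ASC (ℕ × ℕ) := (interval m).prod (interval n)

/-- A face sphere: a simplicial map `(I_m × I_n, ∂(I_m × I_n)) → (X, x₀)`. -/
def IsFaceSphere [DecidableEq V] (X : ASC V) (x₀ : V) (m n : ℕ) (f : ℕ × ℕ → V) : Prop :=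
  IsSimplicialMap (prodInterval m n) X f ∧
  ∀ p : ℕ × ℕ, p.1 ≤ m → p.2 ≤ n →
    (p.1 = 0 ∨ p.1 = m ∨ p.2 = 0 ∨ p.2 = n) → f p = x₀

/-- Contiguity equivalence of face spheres, relative the boundary. -/
def FaceContigEquiv [DecidableEq V] (X : ASC V) (x₀ : V) (m n : ℕ) :
    (ℕ × ℕ → V) → (ℕ × ℕ → V) → Prop :=
  Relation.ReflTransGen (fun a b =>
    IsFaceSphere X x₀ m n a ∧ IsFaceSphere X x₀ m n b ∧
      Contiguous (prodInterval m n) X a b)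

/-- The trivial extension `f ∘ (α_m^r × α_n^s)`. -/
def trivExt (m n r s : ℕ) (f : ℕ × ℕ → V) : ℕ × ℕ → V :=
  f ∘ Prod.map ((alpha m)^[r]) ((alpha n)^[s])

/-- Extension-contiguity equivalence of face spheres of possibly different sizes. -/
def ExtContigEquiv [DecidableEq V] (X : ASC V) (x₀ : V) (m n : ℕ) (f : ℕ × ℕ → V)
    (m' n' : ℕ) (g : ℕ × ℕ → V) : Prop :=
  ∃ M N, m ≤ M ∧ m' ≤ M ∧ n ≤ N ∧ n' ≤ N ∧
    FaceContigEquiv X x₀ M N (trivExt m n (M - m) (N - n) f)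
      (trivExt m' n' (M - m') (N - n') g)

/-- The product `f · g` of face spheres: `f` in the lower-left block,
a translate of `g` in the upper-right block, basepoint elsewhere. -/
def fsMul (x₀ : V) (m n : ℕ) (f g : ℕ × ℕ → V) : ℕ × ℕ → V := fun p =>
  if p.1 ≤ m ∧ p.2 ≤ n then f p
  else if m + 1 ≤ p.1 ∧ n + 1 ≤ p.2 then g (p.1 - (m + 1), p.2 - (n + 1))
  else x₀
noncomputable section
open Set

/-- The triangulation `I_{m,n}` of the unit square: vertices `(i,j)` (standing for
`(i/m, j/n)`), each grid square cut by the lower-left-to-upper-right diagonal. -/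
def gridComplex (m n : ℕ) : ASC (ℕ × ℕ) where
  faces := {s | ∃ i j, i + 1 ≤ m ∧ j + 1 ≤ n ∧
    (s ⊆ {(i, j), (i + 1, j), (i + 1, j + 1)} ∨ s ⊆ {(i, j), (i, j + 1), (i + 1, j + 1)})}
  down_closed := by
    rintro s t ⟨i, j, hi, hj, h⟩ hts
    exact ⟨i, j, hi, hj, h.imp hts.trans hts.trans⟩

/-- Barycentric coordinates of a point of the unit square with respect to the
triangulation `I_{m,n}`. -/
noncomputable def bary (m n : ℕ) (y : ℝ × ℝ) : ℕ × ℕ → ℝ := fun p =>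
  let u : ℝ := m * y.1
  let v : ℝ := n * y.2
  let i : ℕ := ⌊u⌋₊
  let j : ℕ := ⌊v⌋₊
  let a : ℝ := u - (i : ℝ)
  let b : ℝ := v - (j : ℝ)
  if b ≤ a then
    (if p = (i, j) then 1 - a else 0) + (if p = (i + 1, j) then a - b else 0) +
      (if p = (i + 1, j + 1) then b else 0)
  else
    (if p = (i, j) then 1 - b else 0) + (if p = (i, j + 1) then b - a else 0) +
      (if p = (i + 1, j + 1) then a else 0)

/-- The geometric realization of a simplicial complex, as a subset of `V → ℝ`
(barycentric coordinates). -/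
def realization (K : ASC V) : Set (V → ℝ) :=
  {w | (∀ v, 0 ≤ w v) ∧ ∃ s ∈ K.faces, (∀ v, v ∉ s → w v = 0) ∧ ∑ v ∈ s, w v = 1}

/-- The realization `|g|` of a vertex map `g` on the triangulation `I_{m,n}`,
as a map from the unit square to barycentric coordinates on the target. -/
noncomputable def gridRealize (g : ℕ × ℕ → V) (m n : ℕ) (y : ℝ × ℝ) : V → ℝ :=
  fun u => ∑ᶠ p ∈ {p : ℕ × ℕ | g p = u}, bary m n y p

def unitSquare : Set (ℝ × ℝ) := Icc (0 : ℝ) 1 ×ˢ Icc (0 : ℝ) 1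

def squareBdry : Set (ℝ × ℝ) :=
  {y ∈ unitSquare | y.1 = 0 ∨ y.1 = 1 ∨ y.2 = 0 ∨ y.2 = 1}

/-- The point of `|X|` corresponding to the vertex `x₀`. -/
def vertexPoint [DecidableEq V] (x₀ : V) : V → ℝ := fun v => if v = x₀ then 1 else 0

/-- A continuous map of pairs `(I², ∂I²) → (|X|, x₀)`. -/
def IsSphereMap [DecidableEq V] (X : ASC V) (x₀ : V) (f : ℝ × ℝ → V → ℝ) : Prop :=
  ContinuousOn f unitSquare ∧ (∀ y ∈ unitSquare, f y ∈ realization X) ∧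
    ∀ y ∈ squareBdry, f y = vertexPoint x₀

/-- `g` is a simplicial approximation to `f`: for every `y` in the square,
`|g|(y)` lies in the carrier of `f(y)` (supports are nested). -/
def IsSimpApprox (X : ASC V) (m n : ℕ) (g : ℕ × ℕ → V) (f : ℝ × ℝ → V → ℝ) : Prop :=
  ∀ y ∈ unitSquare, ∀ u : V, gridRealize g m n y u ≠ 0 → f y u ≠ 0

/-- A simplicial map of pairs `(I_{m,n}, ∂I_{m,n}) → (X, x₀)`. -/
def IsGridSphere [DecidableEq V] (X : ASC V) (x₀ : V) (m n : ℕ) (g : ℕ × ℕ → V) : Prop :=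
  IsSimplicialMap (gridComplex m n) X g ∧
  ∀ p : ℕ × ℕ, p.1 ≤ m → p.2 ≤ n →
    (p.1 = 0 ∨ p.1 = m ∨ p.2 = 0 ∨ p.2 = n) → g p = x₀

/-- Homotopy relative the boundary between two maps `(I², ∂I²) → (|X|, x₀)`. -/
def HtpyRelBdry (X : ASC V) (F G : ℝ × ℝ → V → ℝ) : Prop :=
  ∃ H : (ℝ × ℝ) × ℝ → V → ℝ,
    ContinuousOn H (unitSquare ×ˢ Icc (0 : ℝ) 1) ∧
    (∀ p ∈ unitSquare ×ˢ Icc (0 : ℝ) 1, H p ∈ realization X) ∧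
    (∀ y ∈ unitSquare, H (y, 0) = F y) ∧
    (∀ y ∈ unitSquare, H (y, 1) = G y) ∧
    (∀ y ∈ squareBdry, ∀ t ∈ Icc (0 : ℝ) 1, H (y, t) = F y)

/-- The vertex map of the subdivision map `ρ_k : I_{km,kn} → I_{m,n}`. -/
def rho (k : ℕ) : ℕ × ℕ → ℕ × ℕ := fun p => (p.1 / k, p.2 / k)

/-- Horizontal concatenation of maps `(I², ∂I²) → (|X|, x₀)`: the product in `π₂`. -/
noncomputable def hcat (F G : ℝ × ℝ → V → ℝ) : ℝ × ℝ → V → ℝ := fun y =>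
  if y.1 ≤ 1 / 2 then F (2 * y.1, y.2) else G (2 * y.1 - 1, y.2)

end
noncomputable section SimpApproxAux
open Set

namespace SimpApproxAux

/-- Closed-form "hat function": the barycentric coordinate of a vertex in the
Freudenthal-type triangulation of the plane, centered at the origin. -/
noncomputable def hat (u v : ℝ) : ℝ :=
  max 0 (min (min (1 - u) (1 - v)) (min (min (1 + u) (1 + v)) (min (1 - u + v) (1 + u - v))))

lemma hat_nonneg (u v : ℝ) : 0 ≤ hat u v := le_max_left _ _

lemma hat_continuous : Continuous fun y : ℝ × ℝ => hat y.1 y.2 := by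
  unfold hat; fun_prop

lemma hat_eq_of {u v w : ℝ} (h0 : 0 ≤ w)
    (h1 : w ≤ 1 - u) (h2 : w ≤ 1 - v) (h3 : w ≤ 1 + u) (h4 : w ≤ 1 + v)
    (h5 : w ≤ 1 - u + v) (h6 : w ≤ 1 + u - v)
    (h : w = 1 - u ∨ w = 1 - v ∨ w = 1 + u ∨ w = 1 + v ∨ w = 1 - u + v ∨ w = 1 + u - v) :
    hat u v = w := by
  have hmin : min (min (1 - u) (1 - v))
      (min (min (1 + u) (1 + v)) (min (1 - u + v) (1 + u - v))) = w := by
    refine le_antisymm ?_ (le_min (le_min h1 h2) (le_min (le_min h3 h4) (le_min h5 h6)))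
    rcases h with h|h|h|h|h|h <;> rw [h]
    · exact min_le_of_left_le (min_le_left _ _)
    · exact min_le_of_left_le (min_le_right _ _)
    · exact min_le_of_right_le (min_le_of_left_le (min_le_left _ _))
    · exact min_le_of_right_le (min_le_of_left_le (min_le_right _ _))
    · exact min_le_of_right_le (min_le_of_right_le (min_le_left _ _))
    · exact min_le_of_right_le (min_le_of_right_le (min_le_right _ _))
  rw [hat, hmin, max_eq_right h0]

lemma hat_eq_zero_of {u v : ℝ}
    (h : 1 - u ≤ 0 ∨ 1 - v ≤ 0 ∨ 1 + u ≤ 0 ∨ 1 + v ≤ 0 ∨ 1 - u + v ≤ 0 ∨ 1 + u - v ≤ 0) :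
    hat u v = 0 := by
  have hmin : min (min (1 - u) (1 - v))
      (min (min (1 + u) (1 + v)) (min (1 - u + v) (1 + u - v))) ≤ 0 := by
    rcases h with h|h|h|h|h|h
    · exact le_trans (min_le_of_left_le (min_le_left _ _)) h
    · exact le_trans (min_le_of_left_le (min_le_right _ _)) h
    · exact le_trans (min_le_of_right_le (min_le_of_left_le (min_le_left _ _))) h
    · exact le_trans (min_le_of_right_le (min_le_of_left_le (min_le_right _ _))) h
    · exact le_trans (min_le_of_right_le (min_le_of_right_le (min_le_left _ _))) h
    · exact le_trans (min_le_of_right_le (min_le_of_right_le (min_le_right _ _))) h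
  rw [hat, max_eq_left hmin]

lemma bounds_of_hat_ne_zero {u v : ℝ} (h : hat u v ≠ 0) :
    -1 < u ∧ u < 1 ∧ -1 < v ∧ v < 1 := by
  set w := min (min (1 - u) (1 - v)) (min (min (1 + u) (1 + v)) (min (1 - u + v) (1 + u - v)))
    with hw
  have hpos : 0 < w := by
    rcases le_or_gt w 0 with h' | h'
    · exact absurd (max_eq_left h') h
    · exact h'
  have c1 : 0 < 1 - u := lt_of_lt_of_le hpos (min_le_of_left_le (min_le_left _ _))
  have c2 : 0 < 1 - v := lt_of_lt_of_le hpos (min_le_of_left_le (min_le_right _ _))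
  have c3 : 0 < 1 + u :=
    lt_of_lt_of_le hpos (min_le_of_right_le (min_le_of_left_le (min_le_left _ _)))
  have c4 : 0 < 1 + v :=
    lt_of_lt_of_le hpos (min_le_of_right_le (min_le_of_left_le (min_le_right _ _)))
  exact ⟨by linarith, by linarith, by linarith, by linarith⟩

lemma bary_eq_hat (m n : ℕ) (y : ℝ × ℝ) (hy1 : 0 ≤ y.1) (hy2 : 0 ≤ y.2) (p : ℕ × ℕ) :
    bary m n y p = hat (m * y.1 - p.1) (n * y.2 - p.2) := by
  obtain ⟨p1, p2⟩ := p
  simp only [bary]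
  set u : ℝ := ↑m * y.1 with hu
  set v : ℝ := ↑n * y.2 with hv
  have hu0 : 0 ≤ u := by positivity
  have hv0 : 0 ≤ v := by positivity
  set i : ℕ := ⌊u⌋₊ with hidef
  set j : ℕ := ⌊v⌋₊ with hjdef
  have hia : (i : ℝ) ≤ u := Nat.floor_le hu0
  have hib : u < i + 1 := Nat.lt_floor_add_one u
  have hja : (j : ℝ) ≤ v := Nat.floor_le hv0
  have hjb : v < j + 1 := Nat.lt_floor_add_one v
  simp only [Prod.mk.injEq]
  rcases lt_trichotomy p1 i with hp1 | hp1 | hp1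
  · -- p1 < i : both sides vanish
    have hc : (p1 : ℝ) + 1 ≤ i := by exact_mod_cast hp1
    rw [hat_eq_zero_of (Or.inl (by linarith))]
    split_ifs <;> first | (exfalso; omega) | ring
  · -- p1 = i
    subst hp1
    rcases lt_trichotomy p2 j with hp2 | hp2 | hp2
    · have hc : (p2 : ℝ) + 1 ≤ j := by exact_mod_cast hp2
      rw [hat_eq_zero_of (Or.inr (Or.inl (by linarith)))]
      split_ifs <;> first | (exfalso; omega) | ring
    · subst hp2
      rcases le_or_gt (v - (j : ℝ)) (u - (i : ℝ)) with hab | hab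
      · rw [if_pos hab, if_pos ⟨rfl, rfl⟩, if_neg (by omega), if_neg (by omega),
          hat_eq_of (w := 1 - (u - (i : ℝ))) (by linarith) (by linarith) (by linarith)
            (by linarith) (by linarith) (by linarith) (by linarith) (Or.inl (by ring))]
        ring
      · rw [if_neg (not_le.mpr hab), if_pos ⟨rfl, rfl⟩, if_neg (by omega), if_neg (by omega),
          hat_eq_of (w := 1 - (v - (j : ℝ))) (by linarith) (by linarith) (by linarith)
            (by linarith) (by linarith) (by linarith) (by linarith)
            (Or.inr (Or.inl (by ring)))]
        ring
    · rcases (Nat.succ_le_of_lt hp2).lt_or_eq with hp2' | hp2'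
      · have hc : (j : ℝ) + 2 ≤ p2 := by exact_mod_cast hp2'
        rw [hat_eq_zero_of (Or.inr (Or.inr (Or.inr (Or.inl (by linarith)))))]
        split_ifs <;> first | (exfalso; omega) | ring
      · -- p2 = j + 1, p1 = i
        have hc : (p2 : ℝ) = (j : ℝ) + 1 := by exact_mod_cast hp2'.symm
        rcases le_or_gt (v - (j : ℝ)) (u - (i : ℝ)) with hab | hab
        · rw [if_pos hab, if_neg (by omega), if_neg (by omega), if_neg (by omega),
            hat_eq_zero_of (Or.inr (Or.inr (Or.inr (Or.inr (Or.inl (by linarith))))))]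
          ring
        · rw [if_neg (not_le.mpr hab), if_neg (by omega), if_pos ⟨rfl, hp2'.symm⟩,
            if_neg (by omega),
            hat_eq_of (w := (v - (j:ℝ)) - (u - (i : ℝ))) (by linarith) (by linarith)
              (by linarith) (by linarith) (by linarith) (by linarith) (by linarith)
              (Or.inr (Or.inr (Or.inr (Or.inr (Or.inl (by linarith))))))]
          ring
  · rcases (Nat.succ_le_of_lt hp1).lt_or_eq with hp1' | hp1'
    · have hc : (i : ℝ) + 2 ≤ p1 := by exact_mod_cast hp1'
      rw [hat_eq_zero_of (Or.inr (Or.inr (Or.inl (by linarith))))]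
      split_ifs <;> first | (exfalso; omega) | ring
    · -- p1 = i + 1
      have hc1 : (p1 : ℝ) = (i : ℝ) + 1 := by exact_mod_cast hp1'.symm
      rcases lt_trichotomy p2 j with hp2 | hp2 | hp2
      · have hc : (p2 : ℝ) + 1 ≤ j := by exact_mod_cast hp2
        rw [hat_eq_zero_of (Or.inr (Or.inl (by linarith)))]
        split_ifs <;> first | (exfalso; omega) | ring
      · subst hp2
        rcases le_or_gt (v - (j : ℝ)) (u - (i : ℝ)) with hab | hab
        · rw [if_pos hab, if_neg (by omega), if_pos ⟨hp1'.symm, rfl⟩, if_neg (by omega),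
            hat_eq_of (w := (u - (i:ℝ)) - (v - (j : ℝ))) (by linarith) (by linarith)
              (by linarith) (by linarith) (by linarith) (by linarith) (by linarith)
              (Or.inr (Or.inr (Or.inr (Or.inr (Or.inr (by linarith))))))]
          ring
        · rw [if_neg (not_le.mpr hab), if_neg (by omega), if_neg (by omega), if_neg (by omega),
            hat_eq_zero_of (Or.inr (Or.inr (Or.inr (Or.inr (Or.inr (by linarith))))))]
          ring
      · rcases (Nat.succ_le_of_lt hp2).lt_or_eq with hp2' | hp2'
        · have hc : (j : ℝ) + 2 ≤ p2 := by exact_mod_cast hp2'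
          rw [hat_eq_zero_of (Or.inr (Or.inr (Or.inr (Or.inl (by linarith)))))]
          split_ifs <;> first | (exfalso; omega) | ring
        · -- p1 = i+1, p2 = j+1
          have hc2 : (p2 : ℝ) = (j : ℝ) + 1 := by exact_mod_cast hp2'.symm
          rcases le_or_gt (v - (j : ℝ)) (u - (i : ℝ)) with hab | hab
          · rw [if_pos hab, if_neg (by omega), if_neg (by omega),
              if_pos ⟨hp1'.symm, hp2'.symm⟩,
              hat_eq_of (w := v - (j : ℝ)) (by linarith) (by linarith) (by linarith)
                (by linarith) (by linarith) (by linarith) (by linarith)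
                (Or.inr (Or.inr (Or.inr (Or.inl (by linarith)))))]
            ring
          · rw [if_neg (not_le.mpr hab), if_neg (by omega), if_neg (by omega),
              if_pos ⟨hp1'.symm, hp2'.symm⟩,
              hat_eq_of (w := u - (i : ℝ)) (by linarith) (by linarith) (by linarith)
                (by linarith) (by linarith) (by linarith) (by linarith)
                (Or.inr (Or.inr (Or.inl (by linarith))))]
            ring

end SimpApproxAux
end SimpApproxAux
namespace SimpApproxAux

variable {V' : Type}

/-- All grid points that can carry a nonzero barycentric coordinate. -/
def gridF (m n : ℕ) : Finset (ℕ × ℕ) := Finset.range (m + 2) ×ˢ Finset.range (n + 2)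

lemma bary_nonneg (m n : ℕ) {y : ℝ × ℝ} (hy1 : 0 ≤ y.1) (hy2 : 0 ≤ y.2) (p : ℕ × ℕ) :
    0 ≤ bary m n y p := by
  rw [bary_eq_hat m n y hy1 hy2]; exact hat_nonneg _ _

lemma bary_bounds {m n : ℕ} {y : ℝ × ℝ} (hy1 : 0 ≤ y.1) (hy2 : 0 ≤ y.2) {p : ℕ × ℕ}
    (h : bary m n y p ≠ 0) :
    -1 < ↑m * y.1 - ↑p.1 ∧ ↑m * y.1 - ↑p.1 < 1 ∧ -1 < ↑n * y.2 - ↑p.2 ∧ ↑n * y.2 - ↑p.2 < 1 := by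
  rw [bary_eq_hat m n y hy1 hy2] at h; exact bounds_of_hat_ne_zero h

lemma bary_le_grid {m n : ℕ} {y : ℝ × ℝ} (hy1 : 0 ≤ y.1) (hy1' : y.1 ≤ 1) (hy2 : 0 ≤ y.2)
    (hy2' : y.2 ≤ 1) {p : ℕ × ℕ} (h : bary m n y p ≠ 0) : p.1 ≤ m ∧ p.2 ≤ n := by
  obtain ⟨_, h2, _, h4⟩ := bary_bounds hy1 hy2 h
  have hm : (m : ℝ) * y.1 ≤ m := mul_le_of_le_one_right (Nat.cast_nonneg m) hy1'
  have hn : (n : ℝ) * y.2 ≤ n := mul_le_of_le_one_right (Nat.cast_nonneg n) hy2'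
  have e1 : (p.1 : ℝ) < m + 1 := by linarith
  have e2 : (p.2 : ℝ) < n + 1 := by linarith
  have e1' : p.1 < m + 1 := by exact_mod_cast e1
  have e2' : p.2 < n + 1 := by exact_mod_cast e2
  omega

lemma bary_mem_gridF {m n : ℕ} {y : ℝ × ℝ} (hy1 : 0 ≤ y.1) (hy1' : y.1 ≤ 1) (hy2 : 0 ≤ y.2)
    (hy2' : y.2 ≤ 1) {p : ℕ × ℕ} (h : bary m n y p ≠ 0) : p ∈ gridF m n := by
  obtain ⟨e1, e2⟩ := bary_le_grid hy1 hy1' hy2 hy2' h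
  simp only [gridF, Finset.mem_product, Finset.mem_range]
  omega

lemma sum_bary (m n : ℕ) {y : ℝ × ℝ} (hy1 : 0 ≤ y.1) (hy1' : y.1 ≤ 1) (hy2 : 0 ≤ y.2)
    (hy2' : y.2 ≤ 1) : ∑ p ∈ gridF m n, bary m n y p = 1 := by
  simp only [bary]
  set u : ℝ := ↑m * y.1 with hu
  set v : ℝ := ↑n * y.2 with hv
  set i : ℕ := ⌊u⌋₊ with hidef
  set j : ℕ := ⌊v⌋₊ with hjdef
  have him : i ≤ m := by
    have h1 : u ≤ (m : ℝ) := mul_le_of_le_one_right (Nat.cast_nonneg m) hy1'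
    have := Nat.floor_le_floor h1
    rwa [Nat.floor_natCast] at this
  have hjn : j ≤ n := by
    have h1 : v ≤ (n : ℝ) := mul_le_of_le_one_right (Nat.cast_nonneg n) hy2'
    have := Nat.floor_le_floor h1
    rwa [Nat.floor_natCast] at this
  have h1 : (i, j) ∈ gridF m n := by
    simp only [gridF, Finset.mem_product, Finset.mem_range]; omega
  have h2 : (i + 1, j) ∈ gridF m n := by
    simp only [gridF, Finset.mem_product, Finset.mem_range]; omega
  have h3 : (i + 1, j + 1) ∈ gridF m n := by
    simp only [gridF, Finset.mem_product, Finset.mem_range]; omega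
  have h4 : (i, j + 1) ∈ gridF m n := by
    simp only [gridF, Finset.mem_product, Finset.mem_range]; omega
  rcases le_or_gt (v - (j : ℝ)) (u - (i : ℝ)) with hab | hab
  · simp only [if_pos hab, Finset.sum_add_distrib, Finset.sum_ite_eq']
    rw [if_pos h1, if_pos h2, if_pos h3]; ring
  · simp only [if_neg (not_le.mpr hab), Finset.sum_add_distrib, Finset.sum_ite_eq']
    rw [if_pos h1, if_pos h4, if_pos h3]; ring

lemma gridRealize_eq [DecidableEq V'] (g : ℕ × ℕ → V') (m n : ℕ) {y : ℝ × ℝ} (hy1 : 0 ≤ y.1) (hy1' : y.1 ≤ 1)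
    (hy2 : 0 ≤ y.2) (hy2' : y.2 ≤ 1) (u : V') :
    gridRealize g m n y u = ∑ p ∈ gridF m n, if g p = u then bary m n y p else 0 := by
  have hset : {p : ℕ × ℕ | g p = u} ∩ Function.support (bary m n y)
      = ↑((gridF m n).filter (fun p => g p = u)) ∩ Function.support (bary m n y) := by
    ext p
    simp only [Set.mem_inter_iff, Set.mem_setOf_eq, Function.mem_support, Finset.coe_filter]
    constructor
    · rintro ⟨hgp, hb⟩
      exact ⟨⟨bary_mem_gridF hy1 hy1' hy2 hy2' hb, hgp⟩, hb⟩
    · rintro ⟨⟨_, hgp⟩, hb⟩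
      exact ⟨hgp, hb⟩
  rw [gridRealize, finsum_mem_eq_sum_of_inter_support_eq (bary m n y) hset, Finset.sum_filter]

lemma gridRealize_nonneg [DecidableEq V'] (g : ℕ × ℕ → V') (m n : ℕ) {y : ℝ × ℝ} (hy1 : 0 ≤ y.1) (hy1' : y.1 ≤ 1)
    (hy2 : 0 ≤ y.2) (hy2' : y.2 ≤ 1) (u : V') : 0 ≤ gridRealize g m n y u := by
  classical
  rw [gridRealize_eq g m n hy1 hy1' hy2 hy2']
  refine Finset.sum_nonneg fun p _ => ?_
  split_ifs
  · exact bary_nonneg m n hy1 hy2 p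
  · exact le_refl 0

lemma gridRealize_exists [DecidableEq V'] {g : ℕ × ℕ → V'} {m n : ℕ} {y : ℝ × ℝ} (hy1 : 0 ≤ y.1) (hy1' : y.1 ≤ 1)
    (hy2 : 0 ≤ y.2) (hy2' : y.2 ≤ 1) {u : V'} (h : gridRealize g m n y u ≠ 0) :
    ∃ p : ℕ × ℕ, g p = u ∧ bary m n y p ≠ 0 := by
  classical
  rw [gridRealize_eq g m n hy1 hy1' hy2 hy2'] at h
  obtain ⟨p, -, hp⟩ := Finset.exists_ne_zero_of_sum_ne_zero h
  by_cases hgp : g p = u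
  · refine ⟨p, hgp, ?_⟩
    rw [if_pos hgp] at hp; exact hp
  · rw [if_neg hgp] at hp; exact absurd rfl hp

lemma sum_gridRealize [DecidableEq V'] {g : ℕ × ℕ → V'} {m n : ℕ} {y : ℝ × ℝ} (hy1 : 0 ≤ y.1)
    (hy1' : y.1 ≤ 1) (hy2 : 0 ≤ y.2) (hy2' : y.2 ≤ 1) {s : Finset V'}
    (hs : ∀ p : ℕ × ℕ, bary m n y p ≠ 0 → g p ∈ s) :
    ∑ u ∈ s, gridRealize g m n y u = 1 := by
  classical
  have : ∀ u ∈ s, gridRealize g m n y u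
      = ∑ p ∈ gridF m n, if g p = u then bary m n y p else 0 :=
    fun u _ => gridRealize_eq g m n hy1 hy1' hy2 hy2' u
  rw [Finset.sum_congr rfl this, Finset.sum_comm]
  have : ∀ p ∈ gridF m n, (∑ u ∈ s, if g p = u then bary m n y p else 0) = bary m n y p := by
    intro p _
    rw [Finset.sum_ite_eq]
    by_cases hb : bary m n y p = 0
    · split_ifs <;> simp [hb]
    · rw [if_pos (hs p hb)]
  rw [Finset.sum_congr rfl this, sum_bary m n hy1 hy1' hy2 hy2']

lemma gridRealize_eq_zero [DecidableEq V'] {g : ℕ × ℕ → V'} {m n : ℕ} {y : ℝ × ℝ} (hy1 : 0 ≤ y.1)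
    (hy1' : y.1 ≤ 1) (hy2 : 0 ≤ y.2) (hy2' : y.2 ≤ 1) {u : V'}
    (h : ∀ p : ℕ × ℕ, bary m n y p ≠ 0 → g p ≠ u) : gridRealize g m n y u = 0 := by
  by_contra hne
  obtain ⟨p, hgp, hb⟩ := gridRealize_exists hy1 hy1' hy2 hy2' hne
  exact h p hb hgp

lemma gridRealize_continuousOn [DecidableEq V'] (g : ℕ × ℕ → V') (m n : ℕ) (u : V') :
    ContinuousOn (fun y : ℝ × ℝ => gridRealize g m n y u) unitSquare := by
  classical
  have hc : Continuous fun y : ℝ × ℝ =>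
      ∑ p ∈ gridF m n, if g p = u then hat (↑m * y.1 - ↑p.1) (↑n * y.2 - ↑p.2) else 0 := by
    refine continuous_finset_sum _ fun p _ => ?_
    by_cases hgp : g p = u
    · simp only [if_pos hgp]
      exact hat_continuous.comp
        (((continuous_const.mul continuous_fst).sub continuous_const).prodMk
          ((continuous_const.mul continuous_snd).sub continuous_const))
    · simp only [if_neg hgp]
      exact continuous_const
  refine ContinuousOn.congr hc.continuousOn fun y hy => ?_
  obtain ⟨⟨hy1, hy1'⟩, hy2, hy2'⟩ := hy
  rw [gridRealize_eq g m n hy1 hy1' hy2 hy2']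
  refine Finset.sum_congr rfl fun p _ => ?_
  by_cases hgp : g p = u
  · rw [if_pos hgp, if_pos hgp, bary_eq_hat m n y hy1 hy2]
  · rw [if_neg hgp, if_neg hgp]

end SimpApproxAux

open SimpApproxAux in
/-- simplicial approximation: every continuous map
`(I², ∂I²) → (|X|, x₀)` admits a simplicial approximation
`g : (I_{m,m}, ∂I_{m,m}) → (X, x₀)` for some large `m`, and `f` is then
homotopic relative the boundary to `|g|`. -/
theorem simplicial_approximation {V : Type} [DecidableEq V] (X : ASC V) (x₀ : V)
    (f : ℝ × ℝ → V → ℝ) (hf : IsSphereMap X x₀ f) :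
    ∃ m : ℕ, 0 < m ∧ ∃ g : ℕ × ℕ → V, IsGridSphere X x₀ m m g ∧
      IsSimpApprox X m m g f ∧ HtpyRelBdry X f (gridRealize g m m) := by

  classical
  obtain ⟨hfc, hfr, hfb⟩ := hf
  have hcompact : IsCompact unitSquare := isCompact_Icc.prod isCompact_Icc
  haveI : CompactSpace unitSquare := isCompact_iff_compactSpace.mp hcompact
  -- every point of the square is in some open star
  have hcov : ∀ z : unitSquare, ∃ v : V, 0 < f ↑z v := by
    intro z
    obtain ⟨hpos, s, hsX, hout, hsum⟩ := hfr ↑z z.2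
    by_contra hc
    push_neg at hc
    have hz : ∀ v ∈ s, f ↑z v = 0 := fun v _ => le_antisymm (hc v) (hpos v)
    rw [Finset.sum_congr rfl hz] at hsum
    simp at hsum
  have hopen : ∀ v : V, IsOpen {z : unitSquare | 0 < f ↑z v} := by
    intro v
    have hfc' : Continuous fun z : unitSquare => f ↑z v :=
      (continuous_apply v).comp hfc.restrict
    exact isOpen_lt continuous_const hfc'
  have hU : (Set.univ : Set unitSquare) ⊆ ⋃ v : V, {z | 0 < f ↑z v} := fun z _ =>
    Set.mem_iUnion.mpr (hcov z)
  obtain ⟨δ, hδ0, hball⟩ := lebesgue_number_lemma_of_metric isCompact_univ hopen hU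
  have key : ∀ z ∈ unitSquare, ∃ v : V, ∀ y ∈ unitSquare, dist y z < δ → 0 < f y v := by
    intro z hz
    obtain ⟨v, hv⟩ := hball ⟨z, hz⟩ trivial
    refine ⟨v, fun y hy hd => ?_⟩
    have : (⟨y, hy⟩ : unitSquare) ∈ Metric.ball (⟨z, hz⟩ : unitSquare) δ := by
      rw [Metric.mem_ball, Subtype.dist_eq]; exact hd
    exact hv this
  -- choose the mesh size
  set m : ℕ := ⌈1 / δ⌉₊ + 1 with hmdef
  have hm0 : 0 < m := Nat.succ_pos _
  have hm' : (0 : ℝ) < m := by positivity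
  have hmδ : 1 / (m : ℝ) < δ := by
    have h1 : 1 / δ ≤ (⌈1 / δ⌉₊ : ℝ) := Nat.le_ceil _
    have h2 : (⌈1 / δ⌉₊ : ℝ) < m := by
      rw [hmdef]; push_cast; linarith
    have h3 : 1 / δ < (m : ℝ) := lt_of_le_of_lt h1 h2
    rw [div_lt_iff₀ hm']
    calc (1 : ℝ) = δ * (1 / δ) := by field_simp
    _ < δ * m := mul_lt_mul_of_pos_left h3 hδ0
  -- grid centers lie in the square
  have hcenter : ∀ p : ℕ × ℕ, p.1 ≤ m → p.2 ≤ m →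
      ((p.1 : ℝ) / m, (p.2 : ℝ) / m) ∈ unitSquare := by
    intro p h1 h2
    refine ⟨⟨by positivity, ?_⟩, by positivity, ?_⟩
    · rw [div_le_one hm']; exact_mod_cast h1
    · rw [div_le_one hm']; exact_mod_cast h2
  -- choose a vertex for each grid point
  have hchoice : ∀ p : ℕ × ℕ, ∃ v : V, p.1 ≤ m ∧ p.2 ≤ m →
      ∀ y ∈ unitSquare, dist y ((p.1 : ℝ) / m, (p.2 : ℝ) / m) < δ → 0 < f y v := by
    intro p
    by_cases hp : p.1 ≤ m ∧ p.2 ≤ m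
    · obtain ⟨v, hv⟩ := key _ (hcenter p hp.1 hp.2)
      exact ⟨v, fun _ => hv⟩
    · exact ⟨x₀, fun h => absurd h hp⟩
  choose vf hvf using hchoice
  set g : ℕ × ℕ → V := fun p => if p.1 ≤ m ∧ p.2 ≤ m then vf p else x₀ with hgdef
  have happrox : ∀ p : ℕ × ℕ, p.1 ≤ m → p.2 ≤ m →
      ∀ y ∈ unitSquare, dist y ((p.1 : ℝ) / m, (p.2 : ℝ) / m) < δ → 0 < f y (g p) := by
    intro p h1 h2 y hy hd
    have hgp : g p = vf p := by rw [hgdef]; exact if_pos ⟨h1, h2⟩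
    rw [hgp]
    exact hvf p ⟨h1, h2⟩ y hy hd
  -- the vertex chosen at a boundary grid point is the basepoint
  have hgbdry : ∀ p : ℕ × ℕ, p.1 ≤ m → p.2 ≤ m →
      (p.1 = 0 ∨ p.1 = m ∨ p.2 = 0 ∨ p.2 = m) → g p = x₀ := by
    intro p h1 h2 hb
    have hzsq := hcenter p h1 h2
    have hzb : ((p.1 : ℝ) / m, (p.2 : ℝ) / m) ∈ squareBdry := by
      refine ⟨hzsq, ?_⟩
      rcases hb with h | h | h | h
      · left; simp [h]
      · right; left; simp only [h]; exact div_self (ne_of_gt hm')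
      · right; right; left; simp [h]
      · right; right; right; simp only [h]; exact div_self (ne_of_gt hm')
    have h0 : 0 < f ((p.1 : ℝ) / m, (p.2 : ℝ) / m) (g p) :=
      happrox p h1 h2 _ hzsq (by rw [dist_self]; exact hδ0)
    rw [hfb _ hzb] at h0
    by_contra hne
    rw [vertexPoint, if_neg hne] at h0
    exact lt_irrefl 0 h0
  -- distance estimate from a nonzero barycentric coordinate
  have hdistp : ∀ y ∈ unitSquare, ∀ p : ℕ × ℕ, bary m m y p ≠ 0 →
      dist y ((p.1 : ℝ) / m, (p.2 : ℝ) / m) < δ := by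
    intro y hy p hb
    obtain ⟨⟨hy1, hy1'⟩, hy2, hy2'⟩ := hy
    obtain ⟨e1, e2, e3, e4⟩ := bary_bounds hy1 hy2 hb
    rw [Prod.dist_eq]
    have c1 : dist y.1 ((p.1 : ℝ) / m) < δ := by
      rw [Real.dist_eq, show y.1 - (p.1 : ℝ) / m = (↑m * y.1 - ↑p.1) / m by field_simp,
        abs_div, abs_of_pos hm']
      calc |↑m * y.1 - (p.1 : ℝ)| / ↑m < 1 / ↑m :=
            (div_lt_div_iff_of_pos_right hm').mpr (abs_lt.mpr ⟨e1, e2⟩)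
      _ < δ := hmδ
    have c2 : dist y.2 ((p.2 : ℝ) / m) < δ := by
      rw [Real.dist_eq, show y.2 - (p.2 : ℝ) / m = (↑m * y.2 - ↑p.2) / m by field_simp,
        abs_div, abs_of_pos hm']
      calc |↑m * y.2 - (p.2 : ℝ)| / ↑m < 1 / ↑m :=
            (div_lt_div_iff_of_pos_right hm').mpr (abs_lt.mpr ⟨e3, e4⟩)
      _ < δ := hmδ
    exact max_lt c1 c2
  -- nonzero barycentric coordinate forces a positive value in the carrier
  have hsupp : ∀ y ∈ unitSquare, ∀ p : ℕ × ℕ, bary m m y p ≠ 0 → 0 < f y (g p) := by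
    intro y hy p hb
    obtain ⟨h1, h2⟩ := bary_le_grid hy.1.1 hy.1.2 hy.2.1 hy.2.2 hb
    exact happrox p h1 h2 y hy (hdistp y hy p hb)
  refine ⟨m, hm0, g, ⟨?_, fun p h1 h2 hb => hgbdry p h1 h2 hb⟩, ?_, ?_⟩
  · -- g is simplicial
    intro σ hσ
    obtain ⟨i, j, hi, hj, hT⟩ := hσ
    have hzsq : (((i : ℝ) + 1 / 2) / m, ((j : ℝ) + 1 / 2) / m) ∈ unitSquare := by
      have hi' : (i : ℝ) + 1 ≤ m := by exact_mod_cast hi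
      have hj' : (j : ℝ) + 1 ≤ m := by exact_mod_cast hj
      refine ⟨⟨by positivity, ?_⟩, by positivity, ?_⟩
      · rw [div_le_one hm']; linarith
      · rw [div_le_one hm']; linarith
    obtain ⟨hpos, s, hsX, hout, hsum⟩ := hfr _ hzsq
    refine X.down_closed hsX ?_
    intro u hu
    rw [Finset.mem_image] at hu
    obtain ⟨p, hpσ, rfl⟩ := hu
    have hpT : (p.1 = i ∨ p.1 = i + 1) ∧ (p.2 = j ∨ p.2 = j + 1) := by
      rcases hT with hT | hT <;>
      · have hmem := hT hpσ
        simp only [Finset.mem_insert, Finset.mem_singleton, Prod.ext_iff] at hmem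
        constructor <;> omega
    have h1 : p.1 ≤ m := by omega
    have h2 : p.2 ≤ m := by omega
    have hd : dist (((i : ℝ) + 1 / 2) / m, ((j : ℝ) + 1 / 2) / m)
        ((p.1 : ℝ) / m, (p.2 : ℝ) / m) < δ := by
      rw [Prod.dist_eq]
      have key2 : ∀ a b : ℕ, (b = a ∨ b = a + 1) →
          dist (((a : ℝ) + 1 / 2) / m) ((b : ℝ) / m) < δ := by
        intro a b hab
        rw [Real.dist_eq,
          show ((a : ℝ) + 1 / 2) / m - (b : ℝ) / m = ((a : ℝ) + 1 / 2 - b) / m by ring,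
          abs_div, abs_of_pos hm']
        have habs : |(a : ℝ) + 1 / 2 - b| < 1 := by
          rcases hab with rfl | rfl
          · rw [abs_lt]; constructor <;> [linarith; linarith]
          · rw [abs_lt]; push_cast; constructor <;> [linarith; linarith]
        calc |(a : ℝ) + 1 / 2 - b| / m < 1 / m := (div_lt_div_iff_of_pos_right hm').mpr habs
        _ < δ := hmδ
      exact max_lt (key2 i p.1 hpT.1) (key2 j p.2 hpT.2)
    have h0 : 0 < f (((i : ℝ) + 1 / 2) / m, ((j : ℝ) + 1 / 2) / m) (g p) :=
      happrox p h1 h2 _ hzsq hd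
    by_contra hus
    rw [hout _ hus] at h0
    exact lt_irrefl 0 h0
  · -- simplicial approximation property
    intro y hy u hne
    obtain ⟨p, hgp, hb⟩ := gridRealize_exists hy.1.1 hy.1.2 hy.2.1 hy.2.2 hne
    rw [← hgp]
    exact (hsupp y hy p hb).ne'
  · -- the straight-line homotopy
    refine ⟨fun q v => (1 - q.2) * f q.1 v + q.2 * gridRealize g m m q.1 v, ?_, ?_, ?_, ?_, ?_⟩
    · -- continuity
      rw [continuousOn_pi]
      intro v
      have hfst : ContinuousOn (Prod.fst : (ℝ × ℝ) × ℝ → ℝ × ℝ)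
          (unitSquare ×ˢ Set.Icc (0 : ℝ) 1) := continuous_fst.continuousOn
      have hf1 : ContinuousOn (fun q : (ℝ × ℝ) × ℝ => f q.1 v)
          (unitSquare ×ˢ Set.Icc (0 : ℝ) 1) := by
        have hco : ContinuousOn (fun y : ℝ × ℝ => f y v) unitSquare :=
          (continuous_apply v).comp_continuousOn hfc
        exact hco.comp hfst fun q hq => hq.1
      have hf2 : ContinuousOn (fun q : (ℝ × ℝ) × ℝ => gridRealize g m m q.1 v)
          (unitSquare ×ˢ Set.Icc (0 : ℝ) 1) :=
        (gridRealize_continuousOn g m m v).comp hfst fun q hq => hq.1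
      have ht : ContinuousOn (fun q : (ℝ × ℝ) × ℝ => q.2)
          (unitSquare ×ˢ Set.Icc (0 : ℝ) 1) := continuous_snd.continuousOn
      exact ((continuousOn_const.sub ht).mul hf1).add (ht.mul hf2)
    · -- membership in the realization
      rintro ⟨y, t⟩ ⟨hy, ht0, ht1⟩
      obtain ⟨hpos, s, hsX, hout, hsum⟩ := hfr y hy
      have hcar : ∀ p : ℕ × ℕ, bary m m y p ≠ 0 → g p ∈ s := by
        intro p hb
        by_contra hns
        have := hsupp y hy p hb
        rw [hout _ hns] at this
        exact lt_irrefl 0 this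
      refine ⟨?_, s, hsX, ?_, ?_⟩
      · intro v
        exact add_nonneg (mul_nonneg (by linarith) (hpos v))
          (mul_nonneg ht0 (gridRealize_nonneg g m m hy.1.1 hy.1.2 hy.2.1 hy.2.2 v))
      · intro v hv
        have h1 : f y v = 0 := hout v hv
        have h2 : gridRealize g m m y v = 0 :=
          gridRealize_eq_zero hy.1.1 hy.1.2 hy.2.1 hy.2.2 fun p hb hgp =>
            hv (hgp ▸ hcar p hb)
        simp only [h1, h2]
        ring
      · have hsg : ∑ v ∈ s, gridRealize g m m y v = 1 :=
          sum_gridRealize hy.1.1 hy.1.2 hy.2.1 hy.2.2 hcar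
        rw [Finset.sum_add_distrib, ← Finset.mul_sum, ← Finset.mul_sum, hsum, hsg]
        ring
    · intro y _
      funext v
      norm_num
    · intro y _
      funext v
      norm_num
    · -- boundary: the homotopy is constant
      intro y hyb t _
      have hy := hyb.1
      have hbx : ∀ p : ℕ × ℕ, bary m m y p ≠ 0 → g p = x₀ := by
        intro p hbp
        obtain ⟨h1, h2⟩ := bary_le_grid hy.1.1 hy.1.2 hy.2.1 hy.2.2 hbp
        obtain ⟨e1, e2, e3, e4⟩ := bary_bounds hy.1.1 hy.2.1 hbp
        apply hgbdry p h1 h2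
        rcases hyb.2 with h | h | h | h
        · left
          rw [h, mul_zero] at e1 e2
          have : (p.1 : ℝ) < 1 := by linarith
          have : p.1 < 1 := by exact_mod_cast this
          omega
        · right; left
          rw [h, mul_one] at e1 e2
          have hlt : (p.1 : ℝ) < m + 1 := by linarith
          have hgt : (m : ℝ) - 1 < p.1 := by linarith
          have hlt' : p.1 < m + 1 := by exact_mod_cast hlt
          have hgt' : (m : ℝ) < (p.1 : ℝ) + 1 := by linarith
          have hgt'' : m < p.1 + 1 := by exact_mod_cast hgt'
          omega
        · right; right; left
          rw [h, mul_zero] at e3 e4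
          have : (p.2 : ℝ) < 1 := by linarith
          have : p.2 < 1 := by exact_mod_cast this
          omega
        · right; right; right
          rw [h, mul_one] at e3 e4
          have hlt : (p.2 : ℝ) < m + 1 := by linarith
          have hlt' : p.2 < m + 1 := by exact_mod_cast hlt
          have hgt' : (m : ℝ) < (p.2 : ℝ) + 1 := by linarith
          have hgt'' : m < p.2 + 1 := by exact_mod_cast hgt'
          omega
      have hG : gridRealize g m m y = f y := by
        rw [hfb y hyb]
        funext v'
        by_cases hv' : v' = x₀
        · subst hv'
          have hx : ∑ u ∈ ({v'} : Finset V), gridRealize g m m y u = 1 :=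
            sum_gridRealize hy.1.1 hy.1.2 hy.2.1 hy.2.2 fun p hbp => by
              rw [hbx p hbp]; exact Finset.mem_singleton_self v'
          rw [Finset.sum_singleton] at hx
          rw [hx, vertexPoint, if_pos rfl]
        · rw [gridRealize_eq_zero hy.1.1 hy.1.2 hy.2.1 hy.2.2
            (fun p hbp => by rw [hbx p hbp]; exact fun h => hv' h.symm),
            vertexPoint, if_neg hv']
      funext v
      show (1 - t) * f y v + t * gridRealize g m m y v = f y v
      rw [hG]
      ring
end

section
/- The subdivision map ρ_k : I_{km,kn} → I_{m,n}, defined on vertices by sending ((ki+r)/(km), (kj+s)/(kn)) to (i/m, j/n) for 0 ≤ r, s < k, is a simplicial map and is a simplicial approximation of the identity map of I². -/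
variable {U V W : Type}

lemma bary_ne_zero_elim (M N : ℕ) (y : ℝ × ℝ) (p : ℕ × ℕ)
    (h0 : 0 ≤ (M : ℝ) * y.1) (h0' : 0 ≤ (N : ℝ) * y.2)
    (h : bary M N y p ≠ 0) :
    p = (⌊(M:ℝ)*y.1⌋₊, ⌊(N:ℝ)*y.2⌋₊) ∨
    (p = (⌊(M:ℝ)*y.1⌋₊ + 1, ⌊(N:ℝ)*y.2⌋₊) ∧
      (N:ℝ)*y.2 - ⌊(N:ℝ)*y.2⌋₊ < (M:ℝ)*y.1 - ⌊(M:ℝ)*y.1⌋₊) ∨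
    (p = (⌊(M:ℝ)*y.1⌋₊, ⌊(N:ℝ)*y.2⌋₊ + 1) ∧
      (M:ℝ)*y.1 - ⌊(M:ℝ)*y.1⌋₊ < (N:ℝ)*y.2 - ⌊(N:ℝ)*y.2⌋₊) ∨
    (p = (⌊(M:ℝ)*y.1⌋₊ + 1, ⌊(N:ℝ)*y.2⌋₊ + 1) ∧
      0 < (M:ℝ)*y.1 - ⌊(M:ℝ)*y.1⌋₊ ∧ 0 < (N:ℝ)*y.2 - ⌊(N:ℝ)*y.2⌋₊) := by
  set u := (M:ℝ)*y.1 with hu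
  set v := (N:ℝ)*y.2 with hv
  set i := ⌊u⌋₊ with hi
  set j := ⌊v⌋₊ with hj
  have ha0 : 0 ≤ u - i := sub_nonneg.2 (Nat.floor_le h0)
  have hb0 : 0 ≤ v - j := sub_nonneg.2 (Nat.floor_le h0')
  have h' : (if v - (j:ℝ) ≤ u - (i:ℝ) then
      (if p = (i, j) then 1 - (u - (i:ℝ)) else 0) +
        (if p = (i + 1, j) then (u - (i:ℝ)) - (v - (j:ℝ)) else 0) +
        (if p = (i + 1, j + 1) then v - (j:ℝ) else 0)
    else
      (if p = (i, j) then 1 - (v - (j:ℝ)) else 0) +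
        (if p = (i, j + 1) then (v - (j:ℝ)) - (u - (i:ℝ)) else 0) +
        (if p = (i + 1, j + 1) then u - (i:ℝ) else 0)) ≠ 0 := h
  clear h
  rcases le_or_gt (v - (j:ℝ)) (u - (i:ℝ)) with hle | hlt
  · rw [if_pos hle] at h'
    by_cases h1 : p = (i, j)
    · exact Or.inl h1
    rw [if_neg h1] at h'
    by_cases h2 : p = (i + 1, j)
    · have h4 : p ≠ (i + 1, j + 1) := by rw [h2]; simp
      rw [if_pos h2, if_neg h4, zero_add, add_zero] at h'
      exact Or.inr (Or.inl ⟨h2, hle.lt_of_ne (sub_ne_zero.mp h').symm⟩)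
    by_cases h4 : p = (i + 1, j + 1)
    · rw [if_neg h2, if_pos h4, zero_add, zero_add] at h'
      have hb : 0 < v - (j:ℝ) := hb0.lt_of_ne (Ne.symm h')
      exact Or.inr (Or.inr (Or.inr ⟨h4, hb.trans_le hle, hb⟩))
    · rw [if_neg h2, if_neg h4] at h'; simp at h'
  · rw [if_neg (not_le.2 hlt)] at h'
    by_cases h1 : p = (i, j)
    · exact Or.inl h1
    rw [if_neg h1] at h'
    by_cases h3 : p = (i, j + 1)
    · exact Or.inr (Or.inr (Or.inl ⟨h3, hlt⟩))
    by_cases h4 : p = (i + 1, j + 1)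
    · rw [if_neg h3, if_pos h4, zero_add, zero_add] at h'
      have ha : 0 < u - (i:ℝ) := ha0.lt_of_ne (Ne.symm h')
      exact Or.inr (Or.inr (Or.inr ⟨h4, ha, ha.trans hlt⟩))
    · rw [if_neg h3, if_neg h4] at h'; simp at h'

-- intro lemmas
lemma bary_corner_ne (M N : ℕ) (y : ℝ × ℝ) :
    bary M N y (⌊(M:ℝ)*y.1⌋₊, ⌊(N:ℝ)*y.2⌋₊) ≠ 0 := by
  set u := (M:ℝ)*y.1; set v := (N:ℝ)*y.2
  set i := ⌊u⌋₊ with hi; set j := ⌊v⌋₊ with hj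
  have ha1 : u - (i:ℝ) < 1 := by
    have := Nat.lt_floor_add_one u; push_cast at this ⊢; linarith
  have hb1 : v - (j:ℝ) < 1 := by
    have := Nat.lt_floor_add_one v; push_cast at this ⊢; linarith
  have e2 : ((i, j) : ℕ × ℕ) ≠ (i + 1, j) := by simp
  have e3 : ((i, j) : ℕ × ℕ) ≠ (i + 1, j + 1) := by simp
  have e4 : ((i, j) : ℕ × ℕ) ≠ (i, j + 1) := by simp
  show (if v - (j:ℝ) ≤ u - (i:ℝ) then
      (if ((i,j) : ℕ×ℕ) = (i, j) then 1 - (u - (i:ℝ)) else 0) +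
        (if ((i,j) : ℕ×ℕ) = (i + 1, j) then (u - (i:ℝ)) - (v - (j:ℝ)) else 0) +
        (if ((i,j) : ℕ×ℕ) = (i + 1, j + 1) then v - (j:ℝ) else 0)
    else
      (if ((i,j) : ℕ×ℕ) = (i, j) then 1 - (v - (j:ℝ)) else 0) +
        (if ((i,j) : ℕ×ℕ) = (i, j + 1) then (v - (j:ℝ)) - (u - (i:ℝ)) else 0) +
        (if ((i,j) : ℕ×ℕ) = (i + 1, j + 1) then u - (i:ℝ) else 0)) ≠ 0
  rcases le_or_gt (v - (j:ℝ)) (u - (i:ℝ)) with hle | hlt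
  · rw [if_pos hle, if_pos rfl, if_neg e2, if_neg e3]; intro hc; simp at hc; linarith
  · rw [if_neg (not_le.2 hlt), if_pos rfl, if_neg e4, if_neg e3]
    intro hc; simp at hc; linarith

lemma bary_right_ne (M N : ℕ) (y : ℝ × ℝ)
    (h : (N:ℝ)*y.2 - ⌊(N:ℝ)*y.2⌋₊ < (M:ℝ)*y.1 - ⌊(M:ℝ)*y.1⌋₊) :
    bary M N y (⌊(M:ℝ)*y.1⌋₊ + 1, ⌊(N:ℝ)*y.2⌋₊) ≠ 0 := by
  set u := (M:ℝ)*y.1; set v := (N:ℝ)*y.2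
  set i := ⌊u⌋₊ with hi; set j := ⌊v⌋₊ with hj
  have e1 : ((i+1, j) : ℕ × ℕ) ≠ (i, j) := by simp
  have e3 : ((i+1, j) : ℕ × ℕ) ≠ (i + 1, j + 1) := by simp
  show (if v - (j:ℝ) ≤ u - (i:ℝ) then
      (if ((i+1,j) : ℕ×ℕ) = (i, j) then 1 - (u - (i:ℝ)) else 0) +
        (if ((i+1,j) : ℕ×ℕ) = (i + 1, j) then (u - (i:ℝ)) - (v - (j:ℝ)) else 0) +
        (if ((i+1,j) : ℕ×ℕ) = (i + 1, j + 1) then v - (j:ℝ) else 0)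
    else
      (if ((i+1,j) : ℕ×ℕ) = (i, j) then 1 - (v - (j:ℝ)) else 0) +
        (if ((i+1,j) : ℕ×ℕ) = (i, j + 1) then (v - (j:ℝ)) - (u - (i:ℝ)) else 0) +
        (if ((i+1,j) : ℕ×ℕ) = (i + 1, j + 1) then u - (i:ℝ) else 0)) ≠ 0
  rw [if_pos h.le, if_neg e1, if_pos rfl, if_neg e3, zero_add, add_zero]
  intro hc; rw [sub_eq_zero] at hc; exact absurd hc.symm (ne_of_lt h)

lemma bary_up_ne (M N : ℕ) (y : ℝ × ℝ)
    (h : (M:ℝ)*y.1 - ⌊(M:ℝ)*y.1⌋₊ < (N:ℝ)*y.2 - ⌊(N:ℝ)*y.2⌋₊) :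
    bary M N y (⌊(M:ℝ)*y.1⌋₊, ⌊(N:ℝ)*y.2⌋₊ + 1) ≠ 0 := by
  set u := (M:ℝ)*y.1; set v := (N:ℝ)*y.2
  set i := ⌊u⌋₊ with hi; set j := ⌊v⌋₊ with hj
  have e1 : ((i, j+1) : ℕ × ℕ) ≠ (i, j) := by simp
  have e3 : ((i, j+1) : ℕ × ℕ) ≠ (i + 1, j + 1) := by simp
  show (if v - (j:ℝ) ≤ u - (i:ℝ) then
      (if ((i,j+1) : ℕ×ℕ) = (i, j) then 1 - (u - (i:ℝ)) else 0) +
        (if ((i,j+1) : ℕ×ℕ) = (i + 1, j) then (u - (i:ℝ)) - (v - (j:ℝ)) else 0) +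
        (if ((i,j+1) : ℕ×ℕ) = (i + 1, j + 1) then v - (j:ℝ) else 0)
    else
      (if ((i,j+1) : ℕ×ℕ) = (i, j) then 1 - (v - (j:ℝ)) else 0) +
        (if ((i,j+1) : ℕ×ℕ) = (i, j + 1) then (v - (j:ℝ)) - (u - (i:ℝ)) else 0) +
        (if ((i,j+1) : ℕ×ℕ) = (i + 1, j + 1) then u - (i:ℝ) else 0)) ≠ 0
  rw [if_neg (not_le.2 h), if_neg e1, if_pos rfl, if_neg e3, zero_add, add_zero]
  intro hc; rw [sub_eq_zero] at hc; exact absurd hc.symm (ne_of_lt h)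

lemma bary_diag_ne (M N : ℕ) (y : ℝ × ℝ)
    (hA : 0 < (M:ℝ)*y.1 - ⌊(M:ℝ)*y.1⌋₊) (hB : 0 < (N:ℝ)*y.2 - ⌊(N:ℝ)*y.2⌋₊) :
    bary M N y (⌊(M:ℝ)*y.1⌋₊ + 1, ⌊(N:ℝ)*y.2⌋₊ + 1) ≠ 0 := by
  set u := (M:ℝ)*y.1; set v := (N:ℝ)*y.2
  set i := ⌊u⌋₊ with hi; set j := ⌊v⌋₊ with hj
  have e1 : ((i+1, j+1) : ℕ × ℕ) ≠ (i, j) := by simp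
  have e2 : ((i+1, j+1) : ℕ × ℕ) ≠ (i + 1, j) := by simp
  have e4 : ((i+1, j+1) : ℕ × ℕ) ≠ (i, j + 1) := by simp
  show (if v - (j:ℝ) ≤ u - (i:ℝ) then
      (if ((i+1,j+1) : ℕ×ℕ) = (i, j) then 1 - (u - (i:ℝ)) else 0) +
        (if ((i+1,j+1) : ℕ×ℕ) = (i + 1, j) then (u - (i:ℝ)) - (v - (j:ℝ)) else 0) +
        (if ((i+1,j+1) : ℕ×ℕ) = (i + 1, j + 1) then v - (j:ℝ) else 0)
    else
      (if ((i+1,j+1) : ℕ×ℕ) = (i, j) then 1 - (v - (j:ℝ)) else 0) +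
        (if ((i+1,j+1) : ℕ×ℕ) = (i, j + 1) then (v - (j:ℝ)) - (u - (i:ℝ)) else 0) +
        (if ((i+1,j+1) : ℕ×ℕ) = (i + 1, j + 1) then u - (i:ℝ) else 0)) ≠ 0
  rcases le_or_gt (v - (j:ℝ)) (u - (i:ℝ)) with hle | hlt
  · rw [if_pos hle, if_neg e1, if_neg e2, if_pos rfl, zero_add, zero_add]
    exact ne_of_gt hB
  · rw [if_neg (not_le.2 hlt), if_neg e1, if_neg e4, if_pos rfl, zero_add, zero_add]
    exact ne_of_gt hA

lemma floor_decomp (k : ℕ) (hk : 0 < k) (x : ℝ) (hx : 0 ≤ x) :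
    ⌊(k:ℝ)*x⌋₊ = k * ⌊x⌋₊ + ⌊(k:ℝ)*(x - ⌊x⌋₊)⌋₊ ∧ ⌊(k:ℝ)*(x - ⌊x⌋₊)⌋₊ < k ∧
      (k:ℝ)*x - ⌊(k:ℝ)*x⌋₊ = (k:ℝ)*(x - ⌊x⌋₊) - ⌊(k:ℝ)*(x - ⌊x⌋₊)⌋₊ := by
  have hfr0 : (0:ℝ) ≤ x - ⌊x⌋₊ := sub_nonneg.2 (Nat.floor_le hx)
  have hfr1 : x - (⌊x⌋₊:ℝ) < 1 := by
    have := Nat.lt_floor_add_one x; linarith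
  have hkR : (0:ℝ) < k := by exact_mod_cast hk
  have e : (k:ℝ)*x = (k:ℝ)*(x - ⌊x⌋₊) + (k * ⌊x⌋₊ : ℕ) := by push_cast; ring
  have h1 : ⌊(k:ℝ)*x⌋₊ = k * ⌊x⌋₊ + ⌊(k:ℝ)*(x - ⌊x⌋₊)⌋₊ := by
    rw [e, Nat.floor_add_natCast (mul_nonneg hkR.le hfr0), add_comm]
  refine ⟨h1, ?_, ?_⟩
  · rw [Nat.floor_lt' (by omega)]; nlinarith
  · rw [h1]; push_cast; ring

lemma rho_simplicial (m n k : ℕ) (hk : 0 < k) :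
    IsSimplicialMap (gridComplex (k * m) (k * n)) (gridComplex m n) (rho k) := by
  rintro s ⟨i, j, hi, hj, h⟩
  have ha1 : i / k + 1 ≤ m :=
    Nat.succ_le_of_lt ((Nat.div_lt_iff_lt_mul hk).2 (by rw [mul_comm]; omega))
  have hb1 : j / k + 1 ≤ n :=
    Nat.succ_le_of_lt ((Nat.div_lt_iff_lt_mul hk).2 (by rw [mul_comm]; omega))
  have hia : (i + 1) / k = i / k ∨ (i + 1) / k = i / k + 1 := by
    rw [Nat.succ_div]; split <;> simp
  have hjb : (j + 1) / k = j / k ∨ (j + 1) / k = j / k + 1 := by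
    rw [Nat.succ_div]; split <;> simp
  refine ⟨i / k, j / k, ha1, hb1, ?_⟩
  rcases h with h | h <;> rcases hia with hia | hia <;> rcases hjb with hjb | hjb <;>
    [left; right; left; left; left; right; left; right] <;>
    · intro q hq
      simp only [Finset.mem_image] at hq
      obtain ⟨p, hp, rfl⟩ := hq
      have hm := h hp
      simp only [Finset.mem_insert, Finset.mem_singleton] at hm ⊢
      rcases hm with rfl | rfl | rfl <;> simp [rho, hia, hjb]

/-- the subdivision map `ρ_k : I_{km,kn} → I_{m,n}` is a
simplicial map and a simplicial approximation of the identity of `I²`. -/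
theorem rho_simpApprox_id (m n k : ℕ) (hm : 0 < m) (hn : 0 < n) (hk : 2 ≤ k) :
    IsSimplicialMap (gridComplex (k * m) (k * n)) (gridComplex m n) (rho k) ∧
    ∀ y ∈ unitSquare, ∀ q : ℕ × ℕ,
      gridRealize (rho k) (k * m) (k * n) y q ≠ 0 → bary m n y q ≠ 0 := by
  constructor
  · exact rho_simplicial m n k (by omega)
  · intro y hy q hq
    have hk0 : 0 < k := by omega
    have hkR : (0:ℝ) < k := by exact_mod_cast hk0
    simp only [unitSquare, Set.mem_prod, Set.mem_Icc] at hy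
    obtain ⟨⟨hy1a, hy1b⟩, hy2a, hy2b⟩ := hy
    -- extract a fine vertex p mapping to q with nonzero barycentric coordinate
    have hex : ∃ p : ℕ × ℕ, rho k p = q ∧ bary (k * m) (k * n) y p ≠ 0 := by
      by_contra hc
      push_neg at hc
      exact hq (finsum_mem_of_eqOn_zero fun p hp => hc p hp)
    obtain ⟨p, rfl, hp⟩ := hex
    -- setup
    set U := (m:ℝ) * y.1 with hUdef
    set V := (n:ℝ) * y.2 with hVdef
    have hU0 : 0 ≤ U := mul_nonneg (Nat.cast_nonneg m) hy1a
    have hV0 : 0 ≤ V := mul_nonneg (Nat.cast_nonneg n) hy2a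
    have hcast1 : ((k*m : ℕ):ℝ) * y.1 = (k:ℝ) * U := by rw [hUdef]; push_cast; ring
    have hcast2 : ((k*n : ℕ):ℝ) * y.2 = (k:ℝ) * V := by rw [hVdef]; push_cast; ring
    have hel := bary_ne_zero_elim (k*m) (k*n) y p
      (by rw [hcast1]; positivity) (by rw [hcast2]; positivity) hp
    rw [hcast1, hcast2] at hel
    obtain ⟨hdecA, hrA, haA⟩ := floor_decomp k hk0 U hU0
    obtain ⟨hdecB, hrB, haB⟩ := floor_decomp k hk0 V hV0
    set I := ⌊U⌋₊ with hI
    set J := ⌊V⌋₊ with hJ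
    set rA := ⌊(k:ℝ)*(U - I)⌋₊ with hrAdef
    set rB := ⌊(k:ℝ)*(V - J)⌋₊ with hrBdef
    set aa := (k:ℝ)*U - ⌊(k:ℝ)*U⌋₊ with haadef
    set bb := (k:ℝ)*V - ⌊(k:ℝ)*V⌋₊ with hbbdef
    -- bounds on fractional parts
    have haa0 : 0 ≤ aa := sub_nonneg.2 (Nat.floor_le (by positivity))
    have hbb0 : 0 ≤ bb := sub_nonneg.2 (Nat.floor_le (by positivity))
    have haa1 : aa < 1 := by
      have := Nat.lt_floor_add_one ((k:ℝ)*U); rw [haadef]; push_cast at this ⊢; linarith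
    have hbb1 : bb < 1 := by
      have := Nat.lt_floor_add_one ((k:ℝ)*V); rw [hbbdef]; push_cast at this ⊢; linarith
    -- express coarse fractional parts
    have hAeq : (k:ℝ)*(U - I) = rA + aa := by rw [haA]; ring
    have hBeq : (k:ℝ)*(V - J) = rB + bb := by rw [haB]; ring
    -- division facts
    have hdivA : ⌊(k:ℝ)*U⌋₊ / k = I := by
      rw [hdecA, Nat.mul_add_div hk0, Nat.div_eq_of_lt hrA, add_zero]
    have hdivB : ⌊(k:ℝ)*V⌋₊ / k = J := by
      rw [hdecB, Nat.mul_add_div hk0, Nat.div_eq_of_lt hrB, add_zero]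
    have hdivA' : (⌊(k:ℝ)*U⌋₊ + 1) / k = if rA + 1 = k then I + 1 else I := by
      rw [hdecA]
      split_ifs with h
      · have e : k * I + rA + 1 = k * (I + 1) := by rw [Nat.mul_add, Nat.mul_one]; omega
        rw [e, Nat.mul_div_cancel_left _ hk0]
      · have e : k * I + rA + 1 = k * I + (rA + 1) := by omega
        rw [e, Nat.mul_add_div hk0, Nat.div_eq_of_lt (by omega), add_zero]
    have hdivB' : (⌊(k:ℝ)*V⌋₊ + 1) / k = if rB + 1 = k then J + 1 else J := by
      rw [hdecB]
      split_ifs with h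
      · have e : k * J + rB + 1 = k * (J + 1) := by rw [Nat.mul_add, Nat.mul_one]; omega
        rw [e, Nat.mul_div_cancel_left _ hk0]
      · have e : k * J + rB + 1 = k * J + (rB + 1) := by omega
        rw [e, Nat.mul_add_div hk0, Nat.div_eq_of_lt (by omega), add_zero]
    -- coarse fractional part comparisons from fine data
    have hmul : ∀ x z : ℝ, (k:ℝ) * x < (k:ℝ) * z → x < z := fun x z h =>
      lt_of_mul_lt_mul_left h hkR.le
    rcases hel with rfl | ⟨rfl, hba⟩ | ⟨rfl, hab⟩ | ⟨rfl, ha', hb'⟩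
    · -- p = (i, j) : q = (I, J)
      have : rho k (⌊(k:ℝ)*U⌋₊, ⌊(k:ℝ)*V⌋₊) = (I, J) := by
        simp only [rho, hdivA, hdivB]
      rw [this]
      exact bary_corner_ne m n y
    · -- p = (i+1, j) with bb < aa
      have : rho k (⌊(k:ℝ)*U⌋₊ + 1, ⌊(k:ℝ)*V⌋₊) =
          ((if rA + 1 = k then I + 1 else I), J) := by
        simp only [rho, hdivA', hdivB]
      rw [this]
      split_ifs with h
      · -- q = (I+1, J); need B < A
        refine bary_right_ne m n y (hmul _ _ ?_)
        rw [hAeq, hBeq]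
        have hrBk : (rB:ℝ) ≤ (k:ℝ) - 1 := by
          have : rB + 1 ≤ k := hrB
          have := (Nat.cast_le (α := ℝ)).2 this
          push_cast at this; linarith
        have hrAk : (rA:ℝ) = (k:ℝ) - 1 := by
          have := congrArg (Nat.cast (R := ℝ)) h
          push_cast at this; linarith
        linarith
      · -- q = (I, J)
        exact bary_corner_ne m n y
    · -- p = (i, j+1) with aa < bb
      have : rho k (⌊(k:ℝ)*U⌋₊, ⌊(k:ℝ)*V⌋₊ + 1) =
          (I, (if rB + 1 = k then J + 1 else J)) := by
        simp only [rho, hdivA, hdivB']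
      rw [this]
      split_ifs with h
      · refine bary_up_ne m n y (hmul _ _ ?_)
        rw [hAeq, hBeq]
        have hrAk : (rA:ℝ) ≤ (k:ℝ) - 1 := by
          have : rA + 1 ≤ k := hrA
          have := (Nat.cast_le (α := ℝ)).2 this
          push_cast at this; linarith
        have hrBk : (rB:ℝ) = (k:ℝ) - 1 := by
          have := congrArg (Nat.cast (R := ℝ)) h
          push_cast at this; linarith
        linarith
      · exact bary_corner_ne m n y
    · -- p = (i+1, j+1) with 0 < aa, 0 < bb
      have : rho k (⌊(k:ℝ)*U⌋₊ + 1, ⌊(k:ℝ)*V⌋₊ + 1) =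
          ((if rA + 1 = k then I + 1 else I), (if rB + 1 = k then J + 1 else J)) := by
        simp only [rho, hdivA', hdivB']
      rw [this]
      split_ifs with h1 h2 h2
      · -- (I+1, J+1); need 0 < A, 0 < B
        refine bary_diag_ne m n y ?_ ?_
        · have := hmul 0 (U - I) ?_
          · linarith
          · rw [mul_zero, hAeq]
            have : (0:ℝ) ≤ rA := Nat.cast_nonneg rA
            linarith
        · have := hmul 0 (V - J) ?_
          · linarith
          · rw [mul_zero, hBeq]
            have : (0:ℝ) ≤ rB := Nat.cast_nonneg rB
            linarith
      · -- (I+1, J); need B < A : rA = k-1, rB+1 < k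
        refine bary_right_ne m n y (hmul _ _ ?_)
        rw [hAeq, hBeq]
        have hrAk : (rA:ℝ) = (k:ℝ) - 1 := by
          have := congrArg (Nat.cast (R := ℝ)) h1
          push_cast at this; linarith
        have hrBk : (rB:ℝ) ≤ (k:ℝ) - 2 := by
          have : rB + 2 ≤ k := by omega
          have := (Nat.cast_le (α := ℝ)).2 this
          push_cast at this; linarith
        linarith
      · -- (I, J+1); need A < B
        refine bary_up_ne m n y (hmul _ _ ?_)
        rw [hAeq, hBeq]
        have hrBk : (rB:ℝ) = (k:ℝ) - 1 := by
          have := congrArg (Nat.cast (R := ℝ)) h2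
          push_cast at this; linarith
        have hrAk : (rA:ℝ) ≤ (k:ℝ) - 2 := by
          have : rA + 2 ≤ k := by omega
          have := (Nat.cast_le (α := ℝ)).2 this
          push_cast at this; linarith
        linarith
      · exact bary_corner_ne m n y
end

section
/- If two simplicial maps g, g' : (I_{m,n}, ∂I_{m,n}) → (X, x₀) have homotopic realizations relative the boundary, |g| ≃ |g'| : (I², ∂I²) → (|X|, x₀), then for some k the compositions g∘ρ_k and g'∘ρ_k : (I_{km,kn}, ∂I_{km,kn}) → (X, x₀) are contiguity equivalent. -/
variable {U V W : Type}

/-- Contiguity equivalence of maps of pairs `(I_{m,n}, ∂I_{m,n}) → (X, x₀)`. -/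
def GridContigEquiv {V : Type} [DecidableEq V] (X : ASC V) (x₀ : V) (m n : ℕ) :
    (ℕ × ℕ → V) → (ℕ × ℕ → V) → Prop :=
  Relation.ReflTransGen (fun a b =>
    IsGridSphere X x₀ m n a ∧ IsGridSphere X x₀ m n b ∧
      Contiguous (gridComplex m n) X a b)

/-- helper: a function supported on three points. -/
noncomputable def tri3 (P₁ P₂ P₃ : ℕ × ℕ) (c₁ c₂ c₃ : ℝ) : ℕ × ℕ → ℝ := fun p =>
  (if p = P₁ then c₁ else 0) + (if p = P₂ then c₂ else 0) + (if p = P₃ then c₃ else 0)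

lemma tri3_support (P₁ P₂ P₃ : ℕ × ℕ) (c₁ c₂ c₃ : ℝ) :
    Function.support (tri3 P₁ P₂ P₃ c₁ c₂ c₃) ⊆ (({P₁, P₂, P₃} : Finset (ℕ × ℕ)) : Set (ℕ × ℕ)) := by
  intro p hp
  simp only [tri3, Function.mem_support] at hp
  by_contra hmem
  simp only [Finset.coe_insert, Set.mem_insert_iff, Finset.coe_singleton,
    Set.mem_singleton_iff, not_or] at hmem
  simp [hmem.1, hmem.2.1, hmem.2.2] at hp

lemma tri3_nonneg (P₁ P₂ P₃ : ℕ × ℕ) {c₁ c₂ c₃ : ℝ} (h₁ : 0 ≤ c₁) (h₂ : 0 ≤ c₂)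
    (h₃ : 0 ≤ c₃) (p : ℕ × ℕ) : 0 ≤ tri3 P₁ P₂ P₃ c₁ c₂ c₃ p := by
  unfold tri3; positivity

lemma tri3_sum {P₁ P₂ P₃ : ℕ × ℕ} (c₁ c₂ c₃ : ℝ) (h12 : P₁ ≠ P₂) (h13 : P₁ ≠ P₃)
    (h23 : P₂ ≠ P₃) :
    ∑ p ∈ ({P₁, P₂, P₃} : Finset (ℕ × ℕ)), tri3 P₁ P₂ P₃ c₁ c₂ c₃ p = c₁ + c₂ + c₃ := by
  rw [Finset.sum_insert (by simp [h12, h13]), Finset.sum_insert (by simp [h23]),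
    Finset.sum_singleton]
  simp [tri3, h12, h13, h23, h12.symm, h13.symm, h23.symm]
  ring

lemma tri3_apply₁ {P₁ P₂ P₃ : ℕ × ℕ} (c₁ c₂ c₃ : ℝ) (h12 : P₁ ≠ P₂) (h13 : P₁ ≠ P₃) :
    tri3 P₁ P₂ P₃ c₁ c₂ c₃ P₁ = c₁ := by simp [tri3, h12, h13]

lemma tri3_apply₂ {P₁ P₂ P₃ : ℕ × ℕ} (c₁ c₂ c₃ : ℝ) (h12 : P₁ ≠ P₂) (h23 : P₂ ≠ P₃) :
    tri3 P₁ P₂ P₃ c₁ c₂ c₃ P₂ = c₂ := by simp [tri3, h12.symm, h23]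

lemma tri3_apply₃ {P₁ P₂ P₃ : ℕ × ℕ} (c₁ c₂ c₃ : ℝ) (h13 : P₁ ≠ P₃) (h23 : P₂ ≠ P₃) :
    tri3 P₁ P₂ P₃ c₁ c₂ c₃ P₃ = c₃ := by simp [tri3, h13.symm, h23.symm]

/-- `bary` expressed via `tri3`. -/
lemma bary_eq (m n : ℕ) (y : ℝ × ℝ) :
    bary m n y =
      if (n : ℝ) * y.2 - (⌊(n : ℝ) * y.2⌋₊ : ℝ) ≤ (m : ℝ) * y.1 - (⌊(m : ℝ) * y.1⌋₊ : ℝ) then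
        tri3 (⌊(m : ℝ) * y.1⌋₊, ⌊(n : ℝ) * y.2⌋₊) (⌊(m : ℝ) * y.1⌋₊ + 1, ⌊(n : ℝ) * y.2⌋₊)
          (⌊(m : ℝ) * y.1⌋₊ + 1, ⌊(n : ℝ) * y.2⌋₊ + 1)
          (1 - ((m : ℝ) * y.1 - (⌊(m : ℝ) * y.1⌋₊ : ℝ)))
          ((m : ℝ) * y.1 - (⌊(m : ℝ) * y.1⌋₊ : ℝ) - ((n : ℝ) * y.2 - (⌊(n : ℝ) * y.2⌋₊ : ℝ)))
          ((n : ℝ) * y.2 - (⌊(n : ℝ) * y.2⌋₊ : ℝ))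
      else
        tri3 (⌊(m : ℝ) * y.1⌋₊, ⌊(n : ℝ) * y.2⌋₊) (⌊(m : ℝ) * y.1⌋₊, ⌊(n : ℝ) * y.2⌋₊ + 1)
          (⌊(m : ℝ) * y.1⌋₊ + 1, ⌊(n : ℝ) * y.2⌋₊ + 1)
          (1 - ((n : ℝ) * y.2 - (⌊(n : ℝ) * y.2⌋₊ : ℝ)))
          ((n : ℝ) * y.2 - (⌊(n : ℝ) * y.2⌋₊ : ℝ) - ((m : ℝ) * y.1 - (⌊(m : ℝ) * y.1⌋₊ : ℝ)))
          ((m : ℝ) * y.1 - (⌊(m : ℝ) * y.1⌋₊ : ℝ)) := by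
  funext p
  simp only [bary, tri3]
  split <;> rfl

/-- Floor arithmetic for subdivided coordinates. -/
lemma floor_subdiv (k i : ℕ) (hk : 0 < k) (t : ℝ) (ht0 : 0 ≤ t) (ht1 : t < 1) :
    ⌊((i : ℝ) + t) / k⌋₊ = i / k ∧
      ((i : ℝ) + t) / k - ((i / k : ℕ) : ℝ) = ((i % k : ℕ) + t) / k := by
  have hkR : (0 : ℝ) < k := by exact_mod_cast hk
  have hidecomp : (i : ℝ) = k * (i / k : ℕ) + (i % k : ℕ) := by
    exact_mod_cast (Nat.div_add_mod i k).symm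
  have hrlt : ((i % k : ℕ) : ℝ) < k := by exact_mod_cast Nat.mod_lt i hk
  have hfrac0 : (0 : ℝ) ≤ ((i % k : ℕ) + t) / k := by positivity
  have hfrac1 : ((i % k : ℕ) + t) / k < 1 := by
    rw [div_lt_one hkR]
    have : ((i % k : ℕ) : ℝ) + 1 ≤ k := by exact_mod_cast Nat.mod_lt i hk
    linarith
  have hsplit : ((i : ℝ) + t) / k = (i / k : ℕ) + ((i % k : ℕ) + t) / k := by
    rw [hidecomp]; field_simp; ring
  constructor
  · rw [Nat.floor_eq_iff (by rw [hsplit]; positivity)]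
    constructor
    · rw [hsplit]; linarith
    · rw [hsplit]; push_cast; linarith
  · rw [hsplit]; ring
lemma tri3_ne_zero {P₁ P₂ P₃ : ℕ × ℕ} {c₁ c₂ c₃ : ℝ} {p : ℕ × ℕ}
    (h12 : P₁ ≠ P₂) (h13 : P₁ ≠ P₃) (h23 : P₂ ≠ P₃)
    (h : tri3 P₁ P₂ P₃ c₁ c₂ c₃ p ≠ 0) :
    (p = P₁ ∧ c₁ ≠ 0) ∨ (p = P₂ ∧ c₂ ≠ 0) ∨ (p = P₃ ∧ c₃ ≠ 0) := by
  by_cases e1 : p = P₁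
  · subst e1
    rw [tri3_apply₁ c₁ c₂ c₃ h12 h13] at h
    exact Or.inl ⟨rfl, h⟩
  by_cases e2 : p = P₂
  · subst e2
    rw [tri3_apply₂ c₁ c₂ c₃ h12 h23] at h
    exact Or.inr (Or.inl ⟨rfl, h⟩)
  by_cases e3 : p = P₃
  · subst e3
    rw [tri3_apply₃ c₁ c₂ c₃ h13 h23] at h
    exact Or.inr (Or.inr ⟨rfl, h⟩)
  · exact absurd (by simp [tri3, e1, e2, e3]) h

lemma bary_nonneg (m n : ℕ) {y : ℝ × ℝ} (h1 : 0 ≤ y.1) (h2 : 0 ≤ y.2) (p : ℕ × ℕ) :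
    0 ≤ bary m n y p := by
  have hu : (0:ℝ) ≤ (m:ℝ) * y.1 := by positivity
  have hv : (0:ℝ) ≤ (n:ℝ) * y.2 := by positivity
  have ha0 : (0:ℝ) ≤ (m:ℝ) * y.1 - (⌊(m:ℝ) * y.1⌋₊ : ℝ) := by
    have := Nat.floor_le hu; linarith
  have hb0 : (0:ℝ) ≤ (n:ℝ) * y.2 - (⌊(n:ℝ) * y.2⌋₊ : ℝ) := by
    have := Nat.floor_le hv; linarith
  have ha1 : (m:ℝ) * y.1 - (⌊(m:ℝ) * y.1⌋₊ : ℝ) ≤ 1 := by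
    have := Nat.lt_floor_add_one ((m:ℝ) * y.1); linarith
  have hb1 : (n:ℝ) * y.2 - (⌊(n:ℝ) * y.2⌋₊ : ℝ) ≤ 1 := by
    have := Nat.lt_floor_add_one ((n:ℝ) * y.2); linarith
  rw [bary_eq]
  by_cases hab : (n:ℝ) * y.2 - (⌊(n:ℝ) * y.2⌋₊ : ℝ) ≤ (m:ℝ) * y.1 - (⌊(m:ℝ) * y.1⌋₊ : ℝ)
  · rw [if_pos hab]
    exact tri3_nonneg _ _ _ (by linarith) (by linarith) hb0 p
  · rw [if_neg hab]
    exact tri3_nonneg _ _ _ (by linarith) (by linarith) ha0 p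

lemma bary_support_finset (m n : ℕ) (y : ℝ × ℝ) :
    ∃ T : Finset (ℕ × ℕ), Function.support (bary m n y) ⊆ (T : Set (ℕ × ℕ)) := by
  rw [bary_eq]
  split
  · exact ⟨_, tri3_support _ _ _ _ _ _⟩
  · exact ⟨_, tri3_support _ _ _ _ _ _⟩

lemma gridRealize_apply {V : Type} (g : ℕ × ℕ → V) (m n : ℕ) (y : ℝ × ℝ) (u : V) :
    gridRealize g m n y u = ∑ᶠ p ∈ {p : ℕ × ℕ | g p = u}, bary m n y p := rfl

lemma gridRealize_eq_sum {V : Type} (g : ℕ × ℕ → V) (m n : ℕ) (y : ℝ × ℝ) (u : V)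
    {T : Finset (ℕ × ℕ)} (hT : Function.support (bary m n y) ⊆ (T : Set (ℕ × ℕ))) :
    gridRealize g m n y u = ∑ p ∈ T, Set.indicator {p : ℕ × ℕ | g p = u} (bary m n y) p := by
  rw [gridRealize_apply, finsum_mem_def]
  refine finsum_eq_finset_sum_of_support_subset _ (fun p hp => hT ?_)
  simp only [Function.mem_support] at hp ⊢
  intro hz
  exact hp (Set.indicator_apply_eq_zero.2 (fun _ => hz))

lemma gridRealize_pos {V : Type} (g : ℕ × ℕ → V) (m n : ℕ) {y : ℝ × ℝ}
    (h1 : 0 ≤ y.1) (h2 : 0 ≤ y.2) {q : ℕ × ℕ} (hq : 0 < bary m n y q) :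
    0 < gridRealize g m n y (g q) := by
  obtain ⟨T, hT⟩ := bary_support_finset m n y
  have hT' : Function.support (bary m n y) ⊆ ((insert q T : Finset (ℕ × ℕ)) : Set (ℕ × ℕ)) := by
    intro p hp; simp only [Finset.coe_insert, Set.mem_insert_iff]; exact Or.inr (hT hp)
  rw [gridRealize_eq_sum g m n y (g q) hT']
  have hmem : q ∈ insert q T := Finset.mem_insert_self q T
  have hnn : ∀ p ∈ insert q T, 0 ≤ Set.indicator {p : ℕ × ℕ | g p = g q} (bary m n y) p :=
    fun p _ => Set.indicator_nonneg (fun p _ => bary_nonneg m n h1 h2 p) p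
  have hsingle := Finset.single_le_sum hnn hmem
  have hind : Set.indicator {p : ℕ × ℕ | g p = g q} (bary m n y) q = bary m n y q :=
    Set.indicator_of_mem (show q ∈ {p : ℕ × ℕ | g p = g q} from rfl) _
  rw [hind] at hsingle
  linarith

lemma gridRealize_eq_vertexPoint {V : Type} [DecidableEq V] {g : ℕ × ℕ → V} {x₀ : V}
    {m n : ℕ} {y : ℝ × ℝ} (hx : ∀ p, bary m n y p ≠ 0 → g p = x₀) :
    gridRealize g m n y = vertexPoint x₀ := by
  have key : ∀ (P₁ P₂ P₃ : ℕ × ℕ) (c₁ c₂ c₃ : ℝ), P₁ ≠ P₂ → P₁ ≠ P₃ → P₂ ≠ P₃ →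
      c₁ + c₂ + c₃ = 1 → bary m n y = tri3 P₁ P₂ P₃ c₁ c₂ c₃ →
      gridRealize g m n y = vertexPoint x₀ := by
    intro P₁ P₂ P₃ c₁ c₂ c₃ h12 h13 h23 hsum hb
    funext u
    have hT : Function.support (bary m n y) ⊆ (({P₁, P₂, P₃} : Finset (ℕ × ℕ)) : Set (ℕ × ℕ)) :=
      hb ▸ tri3_support P₁ P₂ P₃ c₁ c₂ c₃
    rw [gridRealize_eq_sum g m n y u hT]
    by_cases hu : u = x₀
    · have heq : ∀ p ∈ ({P₁, P₂, P₃} : Finset (ℕ × ℕ)),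
          Set.indicator {p : ℕ × ℕ | g p = u} (bary m n y) p = bary m n y p := by
        intro p _
        by_cases hgp : g p = u
        · exact Set.indicator_of_mem (show p ∈ {p : ℕ × ℕ | g p = u} from hgp) (bary m n y)
        · have hz : bary m n y p = 0 := by
            by_contra hne; exact hgp ((hx p hne).trans hu.symm)
          rw [hz]
          exact Set.indicator_apply_eq_zero.2 (fun _ => hz)
      rw [Finset.sum_congr rfl heq, hb, tri3_sum c₁ c₂ c₃ h12 h13 h23, hsum]
      simp [vertexPoint, hu]
    · have heq : ∀ p ∈ ({P₁, P₂, P₃} : Finset (ℕ × ℕ)),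
          Set.indicator {p : ℕ × ℕ | g p = u} (bary m n y) p = 0 := by
        intro p _
        by_cases hgp : g p = u
        · have hz : bary m n y p = 0 := by
            by_contra hne; exact hu ((hgp.symm.trans (hx p hne)))
          exact Set.indicator_apply_eq_zero.2 (fun _ => hz)
        · exact Set.indicator_of_notMem (show p ∉ {p : ℕ × ℕ | g p = u} from hgp) _
      rw [Finset.sum_congr rfl heq]
      simp [vertexPoint, hu]
  have hbe := bary_eq m n y
  split at hbe
  · refine key _ _ _ _ _ _ ?_ ?_ ?_ (by ring) hbe <;> simp [Prod.ext_iff]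
  · refine key _ _ _ _ _ _ ?_ ?_ ?_ (by ring) hbe <;> simp [Prod.ext_iff]
lemma neq₁ (i j : ℕ) : (i, j) ≠ (i + 1, j) := by simp
lemma neq₂ (i j : ℕ) : (i, j) ≠ (i + 1, j + 1) := by simp
lemma neq₃ (i j : ℕ) : (i + 1, j) ≠ (i + 1, j + 1) := by simp
lemma neq₄ (i j : ℕ) : (i, j) ≠ (i, j + 1) := by simp
lemma neq₅ (i j : ℕ) : (i, j + 1) ≠ (i + 1, j + 1) := by simp

lemma bary_side_x (m n : ℕ) {y : ℝ × ℝ} (h2a : 0 ≤ y.2) (h2b : y.2 ≤ 1) (c : ℕ)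
    (hc : (m : ℝ) * y.1 = (c : ℝ)) :
    ∀ p, bary m n y p ≠ 0 → p.1 = c ∧ p.2 ≤ n := by
  have hi : ⌊(m : ℝ) * y.1⌋₊ = c := by rw [hc, Nat.floor_natCast]
  have ha : (m : ℝ) * y.1 - (⌊(m : ℝ) * y.1⌋₊ : ℝ) = 0 := by rw [hi, hc, sub_self]
  have hv : (0:ℝ) ≤ (n:ℝ) * y.2 := by positivity
  have hb0 : (0:ℝ) ≤ (n:ℝ) * y.2 - (⌊(n:ℝ) * y.2⌋₊ : ℝ) := by
    have := Nat.floor_le hv; linarith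
  have hj_le : ⌊(n:ℝ) * y.2⌋₊ ≤ n := by
    have h1 : (n:ℝ) * y.2 ≤ (n:ℝ) := by nlinarith
    have := Nat.floor_le_floor (R := ℝ) h1
    rwa [Nat.floor_natCast] at this
  have hj_lt : (0:ℝ) < (n:ℝ) * y.2 - (⌊(n:ℝ) * y.2⌋₊ : ℝ) → ⌊(n:ℝ) * y.2⌋₊ < n := by
    intro hb
    have h1 : ((⌊(n:ℝ) * y.2⌋₊ : ℕ) : ℝ) < (n : ℝ) := by nlinarith
    exact_mod_cast h1
  intro p hp
  rw [bary_eq] at hp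
  by_cases hab : (n:ℝ) * y.2 - (⌊(n:ℝ) * y.2⌋₊ : ℝ) ≤ (m:ℝ) * y.1 - (⌊(m:ℝ) * y.1⌋₊ : ℝ)
  · rw [if_pos hab] at hp
    rcases tri3_ne_zero (neq₁ _ _) (neq₂ _ _) (neq₃ _ _) hp with ⟨he, _⟩ | ⟨_, hc2⟩ | ⟨_, hc3⟩
    · exact ⟨by rw [he]; exact hi, by rw [he]; exact hj_le⟩
    · exact absurd (by rw [ha]; linarith) hc2
    · exact absurd (by linarith [ha ▸ hab]) hc3
  · rw [if_neg hab] at hp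
    push_neg at hab
    rw [ha] at hab
    rcases tri3_ne_zero (neq₄ _ _) (neq₂ _ _) (neq₅ _ _) hp with ⟨he, _⟩ | ⟨he, _⟩ | ⟨_, hc3⟩
    · exact ⟨by rw [he]; exact hi, by rw [he]; exact hj_le⟩
    · exact ⟨by rw [he]; exact hi, by rw [he]; exact hj_lt hab⟩
    · exact absurd ha hc3

lemma bary_side_y (m n : ℕ) {y : ℝ × ℝ} (h1a : 0 ≤ y.1) (h1b : y.1 ≤ 1) (c : ℕ)
    (hc : (n : ℝ) * y.2 = (c : ℝ)) :
    ∀ p, bary m n y p ≠ 0 → p.2 = c ∧ p.1 ≤ m := by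
  have hj : ⌊(n : ℝ) * y.2⌋₊ = c := by rw [hc, Nat.floor_natCast]
  have hb : (n : ℝ) * y.2 - (⌊(n : ℝ) * y.2⌋₊ : ℝ) = 0 := by rw [hj, hc, sub_self]
  have hu : (0:ℝ) ≤ (m:ℝ) * y.1 := by positivity
  have ha0 : (0:ℝ) ≤ (m:ℝ) * y.1 - (⌊(m:ℝ) * y.1⌋₊ : ℝ) := by
    have := Nat.floor_le hu; linarith
  have hi_le : ⌊(m:ℝ) * y.1⌋₊ ≤ m := by
    have h1 : (m:ℝ) * y.1 ≤ (m:ℝ) := by nlinarith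
    have := Nat.floor_le_floor (R := ℝ) h1
    rwa [Nat.floor_natCast] at this
  have hi_lt : (0:ℝ) < (m:ℝ) * y.1 - (⌊(m:ℝ) * y.1⌋₊ : ℝ) → ⌊(m:ℝ) * y.1⌋₊ < m := by
    intro hb'
    have h1 : ((⌊(m:ℝ) * y.1⌋₊ : ℕ) : ℝ) < (m : ℝ) := by nlinarith
    exact_mod_cast h1
  intro p hp
  rw [bary_eq] at hp
  rw [if_pos (by rw [hb]; exact ha0)] at hp
  rcases tri3_ne_zero (neq₁ _ _) (neq₂ _ _) (neq₃ _ _) hp with ⟨he, _⟩ | ⟨he, hc2⟩ | ⟨_, hc3⟩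
  · exact ⟨by rw [he]; exact hj, by rw [he]; exact hi_le⟩
  · have hapos : (0:ℝ) < (m:ℝ) * y.1 - (⌊(m:ℝ) * y.1⌋₊ : ℝ) := by
      rcases lt_or_eq_of_le ha0 with h | h
      · exact h
      · exact absurd (by rw [hb, ← h]; ring) hc2
    exact ⟨by rw [he]; exact hj, by rw [he]; exact Nat.succ_le_of_lt (hi_lt hapos)⟩
  · exact absurd hb hc3

lemma bary_bdry {V : Type} (m n : ℕ) (g : ℕ × ℕ → V) (x₀ : V)
    (hgb : ∀ p : ℕ × ℕ, p.1 ≤ m → p.2 ≤ n →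
      (p.1 = 0 ∨ p.1 = m ∨ p.2 = 0 ∨ p.2 = n) → g p = x₀)
    {y : ℝ × ℝ} (hy : y ∈ squareBdry) : ∀ p, bary m n y p ≠ 0 → g p = x₀ := by
  obtain ⟨hyu, hside⟩ := hy
  rw [unitSquare, Set.mem_prod, Set.mem_Icc, Set.mem_Icc] at hyu
  obtain ⟨⟨h1a, h1b⟩, ⟨h2a, h2b⟩⟩ := hyu
  intro p hp
  rcases hside with h | h | h | h
  · obtain ⟨hp1, hp2⟩ := bary_side_x m n h2a h2b 0 (by rw [h]; simp) p hp
    exact hgb p (by rw [hp1]; exact Nat.zero_le m) hp2 (Or.inl hp1)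
  · obtain ⟨hp1, hp2⟩ := bary_side_x m n h2a h2b m (by rw [h]; simp) p hp
    exact hgb p (le_of_eq hp1) hp2 (Or.inr (Or.inl hp1))
  · obtain ⟨hp1, hp2⟩ := bary_side_y m n h1a h1b 0 (by rw [h]; simp) p hp
    exact hgb p hp2 (by rw [hp1]; exact Nat.zero_le n) (Or.inr (Or.inr (Or.inl hp1)))
  · obtain ⟨hp1, hp2⟩ := bary_side_y m n h1a h1b n (by rw [h]; simp) p hp
    exact hgb p hp2 (le_of_eq hp1) (Or.inr (Or.inr (Or.inr hp1)))
lemma div_succ_lt (k i : ℕ) (hk : 0 < k) (h : i % k + 1 < k) : (i + 1) / k = i / k := by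
  conv_lhs => rw [← Nat.div_add_mod i k]
  rw [Nat.add_assoc, Nat.mul_add_div hk, Nat.div_eq_of_lt h, Nat.add_zero]

lemma div_succ_eq (k i : ℕ) (hk : 0 < k) (h : i % k + 1 = k) : (i + 1) / k = i / k + 1 := by
  conv_lhs => rw [← Nat.div_add_mod i k]
  rw [Nat.add_assoc, h, ← Nat.mul_succ, Nat.mul_div_cancel_left _ hk]

lemma div_lt_div_k {x y kk : ℝ} (hkk : 0 < kk) (h : x < y) : x / kk < y / kk := by
  rw [div_lt_div_iff₀ hkk hkk]
  nlinarith

lemma bary_pos_lower (m n : ℕ) (y : ℝ × ℝ) (I J : ℕ)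
    (hfi : ⌊(m:ℝ) * y.1⌋₊ = I) (hfj : ⌊(n:ℝ) * y.2⌋₊ = J)
    (hb0 : 0 < (n:ℝ) * y.2 - (J:ℝ)) (hba : (n:ℝ) * y.2 - (J:ℝ) < (m:ℝ) * y.1 - (I:ℝ))
    (ha1 : (m:ℝ) * y.1 - (I:ℝ) < 1) :
    ∀ q ∈ ({(I, J), (I + 1, J), (I + 1, J + 1)} : Finset (ℕ × ℕ)), 0 < bary m n y q := by
  intro q hq
  rw [bary_eq, hfi, hfj, if_pos (by linarith)]
  simp only [Finset.mem_insert, Finset.mem_singleton] at hq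
  rcases hq with rfl | rfl | rfl
  · rw [tri3_apply₁ _ _ _ (neq₁ _ _) (neq₂ _ _)]; linarith
  · rw [tri3_apply₂ _ _ _ (neq₁ _ _) (neq₃ _ _)]; linarith
  · rw [tri3_apply₃ _ _ _ (neq₂ _ _) (neq₃ _ _)]; linarith

lemma bary_pos_upper (m n : ℕ) (y : ℝ × ℝ) (I J : ℕ)
    (hfi : ⌊(m:ℝ) * y.1⌋₊ = I) (hfj : ⌊(n:ℝ) * y.2⌋₊ = J)
    (ha0 : 0 < (m:ℝ) * y.1 - (I:ℝ)) (hab : (m:ℝ) * y.1 - (I:ℝ) < (n:ℝ) * y.2 - (J:ℝ))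
    (hb1 : (n:ℝ) * y.2 - (J:ℝ) < 1) :
    ∀ q ∈ ({(I, J), (I, J + 1), (I + 1, J + 1)} : Finset (ℕ × ℕ)), 0 < bary m n y q := by
  intro q hq
  rw [bary_eq, hfi, hfj, if_neg (by push_neg; linarith)]
  simp only [Finset.mem_insert, Finset.mem_singleton] at hq
  rcases hq with rfl | rfl | rfl
  · rw [tri3_apply₁ _ _ _ (neq₄ _ _) (neq₂ _ _)]; linarith
  · rw [tri3_apply₂ _ _ _ (neq₄ _ _) (neq₅ _ _)]; linarith
  · rw [tri3_apply₃ _ _ _ (neq₂ _ _) (neq₅ _ _)]; linarith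

lemma key_lemma (k m n i j : ℕ) (hk : 0 < k) (hm : 0 < m) (hn : 0 < n)
    (hi : i + 1 ≤ k * m) (hj : j + 1 ≤ k * n) (Tri : Finset (ℕ × ℕ))
    (hT : Tri = {(i, j), (i + 1, j), (i + 1, j + 1)} ∨
          Tri = {(i, j), (i, j + 1), (i + 1, j + 1)}) :
    ∃ (y : ℝ × ℝ) (Tc : Finset (ℕ × ℕ)),
      y ∈ unitSquare ∧
      ((i:ℝ) / ((k:ℝ) * m) ≤ y.1 ∧ y.1 ≤ ((i:ℝ) + 1) / ((k:ℝ) * m)) ∧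
      ((j:ℝ) / ((k:ℝ) * n) ≤ y.2 ∧ y.2 ≤ ((j:ℝ) + 1) / ((k:ℝ) * n)) ∧
      Tc ∈ (gridComplex m n).faces ∧
      (∀ w ∈ Tri, rho k w ∈ Tc) ∧
      (∀ q ∈ Tc, 0 < bary m n y q) := by
  have hk0 : (0:ℝ) < (k:ℝ) := by exact_mod_cast hk
  have hm0 : (0:ℝ) < (m:ℝ) := by exact_mod_cast hm
  have hn0 : (0:ℝ) < (n:ℝ) := by exact_mod_cast hn
  have hkm0 : (0:ℝ) < (k:ℝ) * m := by positivity
  have hkn0 : (0:ℝ) < (k:ℝ) * n := by positivity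
  have hI : i / k + 1 ≤ m := by
    have h' : i < m * k := by rw [mul_comm]; omega
    exact Nat.succ_le_of_lt ((Nat.div_lt_iff_lt_mul hk).2 h')
  have hJ : j / k + 1 ≤ n := by
    have h' : j < n * k := by rw [mul_comm]; omega
    exact Nat.succ_le_of_lt ((Nat.div_lt_iff_lt_mul hk).2 h')
  have hr_lt : i % k < k := Nat.mod_lt i hk
  have hρ_lt : j % k < k := Nat.mod_lt j hk
  have hrR : ((i % k : ℕ) : ℝ) + 1 ≤ (k:ℝ) := by exact_mod_cast hr_lt
  have hρR : ((j % k : ℕ) : ℝ) + 1 ≤ (k:ℝ) := by exact_mod_cast hρ_lt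
  have core : ∀ t s : ℝ, 0 < t → t < 1 → 0 < s → s < 1 →
      (((i:ℝ) + t) / ((k:ℝ) * m), ((j:ℝ) + s) / ((k:ℝ) * n)) ∈ unitSquare ∧
      ((i:ℝ) / ((k:ℝ) * m) ≤ ((i:ℝ) + t) / ((k:ℝ) * m) ∧
        ((i:ℝ) + t) / ((k:ℝ) * m) ≤ ((i:ℝ) + 1) / ((k:ℝ) * m)) ∧
      ((j:ℝ) / ((k:ℝ) * n) ≤ ((j:ℝ) + s) / ((k:ℝ) * n) ∧
        ((j:ℝ) + s) / ((k:ℝ) * n) ≤ ((j:ℝ) + 1) / ((k:ℝ) * n)) ∧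
      ⌊(m:ℝ) * (((i:ℝ) + t) / ((k:ℝ) * m))⌋₊ = i / k ∧
      ⌊(n:ℝ) * (((j:ℝ) + s) / ((k:ℝ) * n))⌋₊ = j / k ∧
      (m:ℝ) * (((i:ℝ) + t) / ((k:ℝ) * m)) - ((i / k : ℕ) : ℝ) = (((i % k : ℕ) : ℝ) + t) / k ∧
      (n:ℝ) * (((j:ℝ) + s) / ((k:ℝ) * n)) - ((j / k : ℕ) : ℝ) = (((j % k : ℕ) : ℝ) + s) / k := by
    intro t s ht0 ht1 hs0 hs1
    have hU : (m:ℝ) * (((i:ℝ) + t) / ((k:ℝ) * m)) = ((i:ℝ) + t) / k := by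
      field_simp
    have hV : (n:ℝ) * (((j:ℝ) + s) / ((k:ℝ) * n)) = ((j:ℝ) + s) / k := by
      field_simp
    have hfi := floor_subdiv k i hk t ht0.le ht1
    have hfj := floor_subdiv k j hk s hs0.le hs1
    refine ⟨⟨?_, ?_⟩, ⟨?_, ?_⟩, ⟨?_, ?_⟩, ?_, ?_, ?_, ?_⟩
    · rw [Set.mem_Icc]
      refine ⟨by positivity, ?_⟩
      rw [div_le_one hkm0]
      have : (i:ℝ) + 1 ≤ (k:ℝ) * m := by exact_mod_cast hi
      linarith
    · rw [Set.mem_Icc]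
      refine ⟨by positivity, ?_⟩
      rw [div_le_one hkn0]
      have : (j:ℝ) + 1 ≤ (k:ℝ) * n := by exact_mod_cast hj
      linarith
    · gcongr <;> linarith
    · gcongr <;> linarith
    · gcongr <;> linarith
    · gcongr <;> linarith
    · rw [hU]; exact hfi.1
    · rw [hV]; exact hfj.1
    · rw [hU]; exact hfi.2
    · rw [hV]; exact hfj.2
  rcases hT with rfl | rfl
  · -- lower fine triangle
    by_cases hc : j % k ≤ i % k
    · -- use t = 2/3, s = 1/3, lower coarse triangle
      obtain ⟨hu, hx1, hx2, hfi, hfj, ha, hb⟩ :=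
        core (2/3) (1/3) (by norm_num) (by norm_num) (by norm_num) (by norm_num)
      have hcR : ((j % k : ℕ) : ℝ) ≤ ((i % k : ℕ) : ℝ) := by exact_mod_cast hc
      refine ⟨_, {(i/k, j/k), (i/k + 1, j/k), (i/k + 1, j/k + 1)}, hu, hx1, hx2,
        ⟨i/k, j/k, hI, hJ, Or.inl (Finset.Subset.refl _)⟩, ?_, ?_⟩
      · intro w hw
        simp only [Finset.mem_insert, Finset.mem_singleton] at hw
        have hh : i % k + 1 = k ∨ i % k + 1 < k := by omega
        rcases hw with rfl | rfl | rfl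
        · show (i / k, j / k) ∈ _; simp
        · show ((i + 1) / k, j / k) ∈ _
          rcases hh with hh | hh
          · rw [div_succ_eq k i hk hh]; simp
          · rw [div_succ_lt k i hk hh]; simp
        · show ((i + 1) / k, (j + 1) / k) ∈ _
          have hhj : j % k + 1 = k ∨ j % k + 1 < k := by omega
          rcases hh with hh | hh <;> rcases hhj with hhj | hhj
          · rw [div_succ_eq k i hk hh, div_succ_eq k j hk hhj]; simp
          · rw [div_succ_eq k i hk hh, div_succ_lt k j hk hhj]; simp
          · omega
          · rw [div_succ_lt k i hk hh, div_succ_lt k j hk hhj]; simp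
      · apply bary_pos_lower m n _ _ _ hfi hfj
        · rw [hb]; positivity
        · rw [ha, hb]; apply div_lt_div_k hk0; linarith
        · rw [ha, div_lt_one hk0]; linarith
    · -- r < ρ: use t = 1/3, s = 2/3, upper coarse triangle
      push_neg at hc
      obtain ⟨hu, hx1, hx2, hfi, hfj, ha, hb⟩ :=
        core (1/3) (2/3) (by norm_num) (by norm_num) (by norm_num) (by norm_num)
      have hcR : ((i % k : ℕ) : ℝ) < ((j % k : ℕ) : ℝ) := by exact_mod_cast hc
      refine ⟨_, {(i/k, j/k), (i/k, j/k + 1), (i/k + 1, j/k + 1)}, hu, hx1, hx2,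
        ⟨i/k, j/k, hI, hJ, Or.inr (Finset.Subset.refl _)⟩, ?_, ?_⟩
      · intro w hw
        simp only [Finset.mem_insert, Finset.mem_singleton] at hw
        have hh : i % k + 1 < k := by omega
        rcases hw with rfl | rfl | rfl
        · show (i / k, j / k) ∈ _; simp
        · show ((i + 1) / k, j / k) ∈ _
          rw [div_succ_lt k i hk hh]; simp
        · show ((i + 1) / k, (j + 1) / k) ∈ _
          have hhj : j % k + 1 = k ∨ j % k + 1 < k := by omega
          rcases hhj with hhj | hhj
          · rw [div_succ_lt k i hk hh, div_succ_eq k j hk hhj]; simp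
          · rw [div_succ_lt k i hk hh, div_succ_lt k j hk hhj]; simp
      · apply bary_pos_upper m n _ _ _ hfi hfj
        · rw [ha]; positivity
        · rw [ha, hb]; apply div_lt_div_k hk0; linarith
        · rw [hb, div_lt_one hk0]; linarith
  · -- upper fine triangle
    by_cases hc : i % k ≤ j % k
    · -- use t = 1/3, s = 2/3, upper coarse triangle
      obtain ⟨hu, hx1, hx2, hfi, hfj, ha, hb⟩ :=
        core (1/3) (2/3) (by norm_num) (by norm_num) (by norm_num) (by norm_num)
      have hcR : ((i % k : ℕ) : ℝ) ≤ ((j % k : ℕ) : ℝ) := by exact_mod_cast hc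
      refine ⟨_, {(i/k, j/k), (i/k, j/k + 1), (i/k + 1, j/k + 1)}, hu, hx1, hx2,
        ⟨i/k, j/k, hI, hJ, Or.inr (Finset.Subset.refl _)⟩, ?_, ?_⟩
      · intro w hw
        simp only [Finset.mem_insert, Finset.mem_singleton] at hw
        have hhj : j % k + 1 = k ∨ j % k + 1 < k := by omega
        rcases hw with rfl | rfl | rfl
        · show (i / k, j / k) ∈ _; simp
        · show (i / k, (j + 1) / k) ∈ _
          rcases hhj with hhj | hhj
          · rw [div_succ_eq k j hk hhj]; simp
          · rw [div_succ_lt k j hk hhj]; simp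
        · show ((i + 1) / k, (j + 1) / k) ∈ _
          have hh : i % k + 1 = k ∨ i % k + 1 < k := by omega
          rcases hh with hh | hh <;> rcases hhj with hhj | hhj
          · rw [div_succ_eq k i hk hh, div_succ_eq k j hk hhj]; simp
          · omega
          · rw [div_succ_lt k i hk hh, div_succ_eq k j hk hhj]; simp
          · rw [div_succ_lt k i hk hh, div_succ_lt k j hk hhj]; simp
      · apply bary_pos_upper m n _ _ _ hfi hfj
        · rw [ha]; positivity
        · rw [ha, hb]; apply div_lt_div_k hk0; linarith
        · rw [hb, div_lt_one hk0]; linarith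
    · -- ρ < r: use t = 2/3, s = 1/3, lower coarse triangle
      push_neg at hc
      obtain ⟨hu, hx1, hx2, hfi, hfj, ha, hb⟩ :=
        core (2/3) (1/3) (by norm_num) (by norm_num) (by norm_num) (by norm_num)
      have hcR : ((j % k : ℕ) : ℝ) < ((i % k : ℕ) : ℝ) := by exact_mod_cast hc
      refine ⟨_, {(i/k, j/k), (i/k + 1, j/k), (i/k + 1, j/k + 1)}, hu, hx1, hx2,
        ⟨i/k, j/k, hI, hJ, Or.inl (Finset.Subset.refl _)⟩, ?_, ?_⟩
      · intro w hw
        simp only [Finset.mem_insert, Finset.mem_singleton] at hw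
        have hhj : j % k + 1 < k := by omega
        rcases hw with rfl | rfl | rfl
        · show (i / k, j / k) ∈ _; simp
        · show (i / k, (j + 1) / k) ∈ _
          rw [div_succ_lt k j hk hhj]; simp
        · show ((i + 1) / k, (j + 1) / k) ∈ _
          have hh : i % k + 1 = k ∨ i % k + 1 < k := by omega
          rcases hh with hh | hh
          · rw [div_succ_lt k j hk hhj, div_succ_eq k i hk hh]; simp
          · rw [div_succ_lt k j hk hhj, div_succ_lt k i hk hh]; simp
      · apply bary_pos_lower m n _ _ _ hfi hfj
        · rw [hb]; positivity
        · rw [ha, hb]; apply div_lt_div_k hk0; linarith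
        · rw [ha, div_lt_one hk0]; linarith
lemma support_face {V : Type} [DecidableEq V] (X : ASC V) {w : V → ℝ} (hw : w ∈ realization X)
    {F : Finset V} (hF : ∀ v ∈ F, w v ≠ 0) : F ∈ X.faces := by
  obtain ⟨_, s, hs, hzero, _⟩ := hw
  refine X.down_closed hs (fun v hv => ?_)
  by_contra hns
  exact hF v hv (hzero v hns)

/-- The point of the prism corresponding to a grid vertex `w` at layer `l` (of `k`). -/
noncomputable def ptc (k m n : ℕ) (w : ℕ × ℕ) (l : ℕ) : (ℝ × ℝ) × ℝ :=
  (((w.1 : ℝ) / ((k:ℝ) * m), (w.2 : ℝ) / ((k:ℝ) * n)), ((min l k : ℕ) : ℝ) / k)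

lemma ptc_mem (k m n : ℕ) (hk : 0 < k) (hm : 0 < m) (hn : 0 < n) (w : ℕ × ℕ) (l : ℕ)
    (h1 : w.1 ≤ k * m) (h2 : w.2 ≤ k * n) :
    ptc k m n w l ∈ unitSquare ×ˢ Set.Icc (0:ℝ) 1 := by
  have hk0 : (0:ℝ) < (k:ℝ) := by exact_mod_cast hk
  have hkm0 : (0:ℝ) < (k:ℝ) * m := by
    have : (0:ℝ) < (m:ℝ) := by exact_mod_cast hm
    positivity
  have hkn0 : (0:ℝ) < (k:ℝ) * n := by
    have : (0:ℝ) < (n:ℝ) := by exact_mod_cast hn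
    positivity
  simp only [ptc, unitSquare, Set.mem_prod, Set.mem_Icc]
  refine ⟨⟨⟨by positivity, ?_⟩, by positivity, ?_⟩, by positivity, ?_⟩
  · rw [div_le_one hkm0]
    exact_mod_cast h1
  · rw [div_le_one hkn0]
    exact_mod_cast h2
  · rw [div_le_one hk0]
    exact_mod_cast min_le_right l k

lemma ptc_bdry (k m n : ℕ) (hk : 0 < k) (hm : 0 < m) (hn : 0 < n) (w : ℕ × ℕ) (l : ℕ)
    (h1 : w.1 ≤ k * m) (h2 : w.2 ≤ k * n)
    (hb : w.1 = 0 ∨ k * m ≤ w.1 ∨ w.2 = 0 ∨ k * n ≤ w.2) :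
    (ptc k m n w l).1 ∈ squareBdry := by
  have hmem := ptc_mem k m n hk hm hn w l h1 h2
  have hkm0 : ((k:ℝ) * m) ≠ 0 := by
    have : (0:ℝ) < (m:ℝ) := by exact_mod_cast hm
    have : (0:ℝ) < (k:ℝ) := by exact_mod_cast hk
    positivity
  have hkn0 : ((k:ℝ) * n) ≠ 0 := by
    have : (0:ℝ) < (n:ℝ) := by exact_mod_cast hn
    have : (0:ℝ) < (k:ℝ) := by exact_mod_cast hk
    positivity
  refine ⟨hmem.1, ?_⟩
  rcases hb with hb | hb | hb | hb
  · left; show (w.1 : ℝ) / ((k:ℝ) * m) = 0; rw [hb]; simp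
  · right; left
    have he : w.1 = k * m := le_antisymm h1 hb
    show (w.1 : ℝ) / ((k:ℝ) * m) = 1
    rw [he]; push_cast; rw [div_self hkm0]
  · right; right; left; show (w.2 : ℝ) / ((k:ℝ) * n) = 0; rw [hb]; simp
  · right; right; right
    have he : w.2 = k * n := le_antisymm h2 hb
    show (w.2 : ℝ) / ((k:ℝ) * n) = 1
    rw [he]; push_cast; rw [div_self hkn0]

lemma ptc_dist (k m n : ℕ) (hk : 0 < k) (hm : 0 < m) (hn : 0 < n) (i j : ℕ) (y : ℝ × ℝ)
    (hy1 : (i:ℝ) / ((k:ℝ) * m) ≤ y.1) (hy1' : y.1 ≤ ((i:ℝ) + 1) / ((k:ℝ) * m))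
    (hy2 : (j:ℝ) / ((k:ℝ) * n) ≤ y.2) (hy2' : y.2 ≤ ((j:ℝ) + 1) / ((k:ℝ) * n))
    (w : ℕ × ℕ) (hw1 : w.1 = i ∨ w.1 = i + 1) (hw2 : w.2 = j ∨ w.2 = j + 1)
    (τ : ℝ) (l : ℕ) (hτ : |τ - ((min l k : ℕ) : ℝ) / k| ≤ 1 / k) :
    dist ((y, τ) : (ℝ × ℝ) × ℝ) (ptc k m n w l) ≤ 1 / k := by
  have hk0 : (0:ℝ) < (k:ℝ) := by exact_mod_cast hk
  have hm1 : (1:ℝ) ≤ (m:ℝ) := by exact_mod_cast hm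
  have hn1 : (1:ℝ) ≤ (n:ℝ) := by exact_mod_cast hn
  have hkm0 : (0:ℝ) < (k:ℝ) * m := by positivity
  have hkn0 : (0:ℝ) < (k:ℝ) * n := by positivity
  have hmle : 1 / ((k:ℝ) * m) ≤ 1 / k :=
    one_div_le_one_div_of_le hk0 (by nlinarith)
  have hnle : 1 / ((k:ℝ) * n) ≤ 1 / k :=
    one_div_le_one_div_of_le hk0 (by nlinarith)
  have hsplit1 : ((i:ℝ) + 1) / ((k:ℝ) * m) = (i:ℝ) / ((k:ℝ) * m) + 1 / ((k:ℝ) * m) := by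
    field_simp
  have hsplit2 : ((j:ℝ) + 1) / ((k:ℝ) * n) = (j:ℝ) / ((k:ℝ) * n) + 1 / ((k:ℝ) * n) := by
    field_simp
  have hc1 : dist y.1 ((w.1 : ℝ) / ((k:ℝ) * m)) ≤ 1 / k := by
    rw [Real.dist_eq, abs_le]
    rcases hw1 with he | he <;> rw [he]
    · constructor
      · have h1k : (0:ℝ) < 1 / (k:ℝ) := by positivity
        linarith
      · linarith
    · push_cast
      constructor
      · linarith
      · have h0 : (0:ℝ) < 1 / ((k:ℝ) * m) := by positivity
        have h1k : (0:ℝ) < 1 / (k:ℝ) := by positivity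
        linarith
  have hc2 : dist y.2 ((w.2 : ℝ) / ((k:ℝ) * n)) ≤ 1 / k := by
    rw [Real.dist_eq, abs_le]
    rcases hw2 with he | he <;> rw [he]
    · constructor
      · have h1k : (0:ℝ) < 1 / (k:ℝ) := by positivity
        linarith
      · linarith
    · push_cast
      constructor
      · linarith
      · have h0 : (0:ℝ) < 1 / ((k:ℝ) * n) := by positivity
        have h1k : (0:ℝ) < 1 / (k:ℝ) := by positivity
        linarith
  have hc3 : dist τ (((min l k : ℕ) : ℝ) / k) ≤ 1 / k := by
    rw [Real.dist_eq]; exact hτ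
  rw [Prod.dist_eq, Prod.dist_eq]
  exact max_le (max_le hc1 hc2) hc3
/-- if `|g| ≃ |g'|` rel boundary, then for some `k` the
compositions `g ∘ ρ_k` and `g' ∘ ρ_k` are contiguity equivalent. -/
theorem htpy_implies_contigEquiv {V : Type} [DecidableEq V] (X : ASC V) (x₀ : V)
    (m n : ℕ) (hm : 0 < m) (hn : 0 < n) (g g' : ℕ × ℕ → V)
    (hg : IsGridSphere X x₀ m n g) (hg' : IsGridSphere X x₀ m n g')
    (h : HtpyRelBdry X (gridRealize g m n) (gridRealize g' m n)) :
    ∃ k : ℕ, 2 ≤ k ∧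
      GridContigEquiv X x₀ (k * m) (k * n) (g ∘ rho k) (g' ∘ rho k) := by
  classical
  obtain ⟨H, Hcont, Hreal, H0, H1, Hbd⟩ := h
  set K : Set ((ℝ × ℝ) × ℝ) := unitSquare ×ˢ Set.Icc (0:ℝ) 1 with hKdef
  have hKcomp : IsCompact K := by
    rw [hKdef, unitSquare]
    exact (isCompact_Icc.prod isCompact_Icc).prod isCompact_Icc
  have hOex : ∀ v : V, ∃ O : Set ((ℝ × ℝ) × ℝ), IsOpen O ∧
      ((fun p => H p v) ⁻¹' ({(0:ℝ)}ᶜ)) ∩ K = O ∩ K := by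
    intro v
    have hcv : ContinuousOn (fun p => H p v) K := (continuous_apply v).comp_continuousOn Hcont
    exact continuousOn_iff'.1 hcv ({(0:ℝ)}ᶜ) isOpen_compl_singleton
  choose O hOopen hOeq using hOex
  have hcover : K ⊆ ⋃ v, O v := by
    intro p hp
    obtain ⟨hnn, s, hs, hz, hsum⟩ := Hreal p hp
    have hne : ∑ v ∈ s, H p v ≠ 0 := by rw [hsum]; norm_num
    obtain ⟨v, hvs, hv⟩ := Finset.exists_ne_zero_of_sum_ne_zero hne
    have hmemv : p ∈ ((fun q => H q v) ⁻¹' ({(0:ℝ)}ᶜ)) ∩ K := ⟨hv, hp⟩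
    rw [hOeq v] at hmemv
    exact Set.mem_iUnion.2 ⟨v, hmemv.1⟩
  obtain ⟨δ₁, hδ₁, hLeb⟩ := lebesgue_number_lemma_of_metric hKcomp hOopen hcover
  choose vv hvv using hLeb
  have hucont : UniformContinuousOn (fun p => H p x₀) K :=
    hKcomp.uniformContinuousOn_of_continuous ((continuous_apply x₀).comp_continuousOn Hcont)
  obtain ⟨δ₂, hδ₂, hUC⟩ := Metric.uniformContinuousOn_iff.1 hucont 1 (by norm_num)
  set δ : ℝ := min δ₁ δ₂ with hδdef
  have hδ : 0 < δ := lt_min hδ₁ hδ₂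
  obtain ⟨k₀, hk₀⟩ := exists_nat_one_div_lt hδ
  set k : ℕ := k₀ + 2 with hkdef
  have hk2 : 2 ≤ k := by omega
  have hk : 0 < k := by omega
  have hkR : (0:ℝ) < (k:ℝ) := by exact_mod_cast hk
  have hkinv : 1 / (k:ℝ) < δ := by
    refine lt_of_le_of_lt ?_ hk₀
    refine one_div_le_one_div_of_le (by positivity) ?_
    rw [hkdef]; push_cast; linarith
  have hptcK : ∀ (w : ℕ × ℕ) (l : ℕ), w.1 ≤ k * m → w.2 ≤ k * n → ptc k m n w l ∈ K :=
    fun w l h1 h2 => ptc_mem k m n hk hm hn w l h1 h2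
  have hnb : ∀ w : ℕ × ℕ, ¬(w.1 = 0 ∨ k * m ≤ w.1 ∨ w.2 = 0 ∨ k * n ≤ w.2) →
      w.1 ≤ k * m ∧ w.2 ≤ k * n := by
    intro w hb; push_neg at hb; exact ⟨le_of_lt hb.2.1, le_of_lt hb.2.2.2⟩
  set φ : ℕ → ℕ × ℕ → V := fun l w =>
    if hb : (w.1 = 0 ∨ k * m ≤ w.1 ∨ w.2 = 0 ∨ k * n ≤ w.2) then x₀
    else vv (ptc k m n w l) (hptcK w l (hnb w hb).1 (hnb w hb).2) with hφdef
  have hφ_bdry : ∀ (l : ℕ) (w : ℕ × ℕ), (w.1 = 0 ∨ k * m ≤ w.1 ∨ w.2 = 0 ∨ k * n ≤ w.2) →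
      φ l w = x₀ := by
    intro l w hb; rw [hφdef]; exact dif_pos hb
  -- main non-vanishing property
  have hnz : ∀ (l : ℕ) (w : ℕ × ℕ), w.1 ≤ k * m → w.2 ≤ k * n →
      ∀ q ∈ K, dist q (ptc k m n w l) < δ → H q (φ l w) ≠ 0 := by
    intro l w h1 h2 q hq hd
    by_cases hb : (w.1 = 0 ∨ k * m ≤ w.1 ∨ w.2 = 0 ∨ k * n ≤ w.2)
    · rw [hφ_bdry l w hb]
      have hsq := ptc_bdry k m n hk hm hn w l h1 h2 hb
      have hIcc : (ptc k m n w l).2 ∈ Set.Icc (0:ℝ) 1 := (hptcK w l h1 h2).2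
      have hH1 : H (ptc k m n w l) x₀ = 1 := by
        have hb' := Hbd (ptc k m n w l).1 hsq (ptc k m n w l).2 hIcc
        rw [Prod.mk.eta] at hb'
        rw [hb', gridRealize_eq_vertexPoint (bary_bdry m n g x₀ hg.2 hsq)]
        simp [vertexPoint]
      have hd2 : dist q (ptc k m n w l) < δ₂ := lt_of_lt_of_le hd (min_le_right _ _)
      have hlt := hUC q hq (ptc k m n w l) (hptcK w l h1 h2) hd2
      rw [Real.dist_eq, hH1] at hlt
      intro h0
      rw [h0] at hlt
      norm_num at hlt
    · have hφv : φ l w = vv (ptc k m n w l) (hptcK w l (hnb w hb).1 (hnb w hb).2) := by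
        rw [hφdef]; exact dif_neg hb
      rw [hφv]
      have hball : q ∈ Metric.ball (ptc k m n w l) δ₁ := by
        rw [Metric.mem_ball]; exact lt_of_lt_of_le hd (min_le_left _ _)
      have hO : q ∈ O (vv (ptc k m n w l) (hptcK w l (hnb w hb).1 (hnb w hb).2)) ∩ K :=
        ⟨hvv _ _ hball, hq⟩
      rw [← hOeq] at hO
      simpa using hO.1
  -- test-point lemma
  have htest : ∀ (i j : ℕ), i + 1 ≤ k * m → j + 1 ≤ k * n →
      ∀ Tri : Finset (ℕ × ℕ),
      (Tri = {(i, j), (i + 1, j), (i + 1, j + 1)} ∨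
        Tri = {(i, j), (i, j + 1), (i + 1, j + 1)}) →
      ∀ l l' : ℕ, l ≤ k → l' ≤ k → (l' = l ∨ l' = l + 1) →
      ∃ Fc ∈ X.faces, (∀ w ∈ Tri, φ l w ∈ Fc ∧ φ l' w ∈ Fc) ∧
        (l = 0 → ∀ w ∈ Tri, g (rho k w) ∈ Fc) ∧
        (l = k → ∀ w ∈ Tri, g' (rho k w) ∈ Fc) := by
    intro i j hi hj Tri hT l l' hl hl' hll'
    obtain ⟨y, Tc, hyU, ⟨hx1, hx1'⟩, ⟨hx2, hx2'⟩, hTc, hmemc, hpos⟩ :=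
      key_lemma k m n i j hk hm hn hi hj Tri hT
    have hwform : ∀ w ∈ Tri, (w.1 = i ∨ w.1 = i + 1) ∧ (w.2 = j ∨ w.2 = j + 1) := by
      intro w hw
      rcases hT with rfl | rfl <;>
        simp only [Finset.mem_insert, Finset.mem_singleton] at hw <;>
        rcases hw with rfl | rfl | rfl <;> simp
    have hYK : ((y, (l:ℝ)/k) : (ℝ × ℝ) × ℝ) ∈ K := by
      refine ⟨hyU, ⟨by positivity, ?_⟩⟩
      rw [div_le_one hkR]; exact_mod_cast hl
    obtain ⟨-, sF, hsF, hzF, -⟩ := Hreal (y, (l:ℝ)/k) hYK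
    have hvF : ∀ v : V, H (y, (l:ℝ)/k) v ≠ 0 → v ∈ sF := by
      intro v hv; by_contra hns; exact hv (hzF v hns)
    have hdistgen : ∀ w ∈ Tri, ∀ l'' : ℕ, l'' ≤ k → (l'' = l ∨ l'' = l + 1) →
        dist ((y, (l:ℝ)/k) : (ℝ × ℝ) × ℝ) (ptc k m n w l'') < δ := by
      intro w hw l'' hl'' hc
      obtain ⟨hw1, hw2⟩ := hwform w hw
      refine lt_of_le_of_lt
        (ptc_dist k m n hk hm hn i j y hx1 hx1' hx2 hx2' w hw1 hw2 ((l:ℝ)/k) l'' ?_) hkinv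
      rw [min_eq_left hl'']
      rcases hc with rfl | rfl
      · rw [sub_self, abs_zero]; positivity
      · have he : (l:ℝ)/k - ((l + 1 : ℕ) : ℝ)/k = -(1/k) := by push_cast; ring
        rw [he, abs_neg, abs_of_nonneg (by positivity)]
    have hwb : ∀ w ∈ Tri, w.1 ≤ k * m ∧ w.2 ≤ k * n := by
      intro w hw
      obtain ⟨hw1, hw2⟩ := hwform w hw
      constructor
      · rcases hw1 with he | he <;> omega
      · rcases hw2 with he | he <;> omega
    have hφmem : ∀ w ∈ Tri, φ l w ∈ sF ∧ φ l' w ∈ sF := by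
      intro w hw
      obtain ⟨hb1, hb2⟩ := hwb w hw
      exact ⟨hvF _ (hnz l w hb1 hb2 _ hYK (hdistgen w hw l hl (Or.inl rfl))),
        hvF _ (hnz l' w hb1 hb2 _ hYK (hdistgen w hw l' hl' hll'))⟩
    refine ⟨sF, hsF, hφmem, ?_, ?_⟩
    · intro hl0 w hw
      have hτ0 : ((l:ℝ)/k) = 0 := by rw [hl0]; simp
      have hHy : H (y, (l:ℝ)/k) = gridRealize g m n y := by rw [hτ0]; exact H0 y hyU
      apply hvF
      rw [hHy]
      exact ne_of_gt (gridRealize_pos g m n hyU.1.1 hyU.2.1 (hpos _ (hmemc w hw)))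
    · intro hlk w hw
      have hτ1 : ((l:ℝ)/k) = 1 := by rw [hlk]; field_simp
      have hHy : H (y, (l:ℝ)/k) = gridRealize g' m n y := by rw [hτ1]; exact H1 y hyU
      apply hvF
      rw [hHy]
      exact ne_of_gt (gridRealize_pos g' m n hyU.1.1 hyU.2.1 (hpos _ (hmemc w hw)))
  -- grid spheres
  have hsphereφ : ∀ l : ℕ, l ≤ k → IsGridSphere X x₀ (k * m) (k * n) (φ l) := by
    intro l hl
    constructor
    · intro s hs
      obtain ⟨i, j, hi, hj, hsub⟩ := hs
      have main : ∀ Tri : Finset (ℕ × ℕ),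
          (Tri = {(i, j), (i + 1, j), (i + 1, j + 1)} ∨
            Tri = {(i, j), (i, j + 1), (i + 1, j + 1)}) → s ⊆ Tri →
          s.image (φ l) ∈ X.faces := by
        intro Tri hT hsub'
        obtain ⟨Fc, hFc, hφm, -, -⟩ := htest i j hi hj Tri hT l l hl hl (Or.inl rfl)
        refine X.down_closed hFc ?_
        intro v hv
        obtain ⟨w, hw, rfl⟩ := Finset.mem_image.1 hv
        exact (hφm w (hsub' hw)).1
      rcases hsub with hsub | hsub
      · exact main _ (Or.inl rfl) hsub
      · exact main _ (Or.inr rfl) hsub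
    · intro p h1 h2 hside
      apply hφ_bdry
      rcases hside with hh | hh | hh | hh
      · exact Or.inl hh
      · exact Or.inr (Or.inl hh.ge)
      · exact Or.inr (Or.inr (Or.inl hh))
      · exact Or.inr (Or.inr (Or.inr hh.ge))
  have hcontigφ : ∀ l : ℕ, l + 1 ≤ k →
      Contiguous (gridComplex (k * m) (k * n)) X (φ l) (φ (l + 1)) := by
    intro l hl1 s hs
    obtain ⟨i, j, hi, hj, hsub⟩ := hs
    have hl : l ≤ k := by omega
    have main : ∀ Tri : Finset (ℕ × ℕ),
        (Tri = {(i, j), (i + 1, j), (i + 1, j + 1)} ∨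
          Tri = {(i, j), (i, j + 1), (i + 1, j + 1)}) → s ⊆ Tri →
        s.image (φ l) ∪ s.image (φ (l + 1)) ∈ X.faces := by
      intro Tri hT hsub'
      obtain ⟨Fc, hFc, hφm, -, -⟩ := htest i j hi hj Tri hT l (l + 1) hl hl1 (Or.inr rfl)
      refine X.down_closed hFc (Finset.union_subset ?_ ?_)
      · intro v hv
        obtain ⟨w, hw, rfl⟩ := Finset.mem_image.1 hv
        exact (hφm w (hsub' hw)).1
      · intro v hv
        obtain ⟨w, hw, rfl⟩ := Finset.mem_image.1 hv
        exact (hφm w (hsub' hw)).2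
    rcases hsub with hsub | hsub
    · exact main _ (Or.inl rfl) hsub
    · exact main _ (Or.inr rfl) hsub
  have hsphere_comp : ∀ gg : ℕ × ℕ → V, IsGridSphere X x₀ m n gg →
      IsGridSphere X x₀ (k * m) (k * n) (gg ∘ rho k) := by
    intro gg hgg
    constructor
    · intro s hs
      obtain ⟨i, j, hi, hj, hsub⟩ := hs
      have main : ∀ Tri : Finset (ℕ × ℕ),
          (Tri = {(i, j), (i + 1, j), (i + 1, j + 1)} ∨
            Tri = {(i, j), (i, j + 1), (i + 1, j + 1)}) → s ⊆ Tri →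
          s.image (gg ∘ rho k) ∈ X.faces := by
        intro Tri hT hsub'
        obtain ⟨y, Tc, -, -, -, hTc, hmemc, -⟩ :=
          key_lemma k m n i j hk hm hn hi hj Tri hT
        have hsr : s.image (rho k) ∈ (gridComplex m n).faces := by
          refine (gridComplex m n).down_closed hTc ?_
          intro v hv
          obtain ⟨w, hw, rfl⟩ := Finset.mem_image.1 hv
          exact hmemc w (hsub' hw)
        have himg := hgg.1 _ hsr
        rwa [Finset.image_image] at himg
      rcases hsub with hsub | hsub
      · exact main _ (Or.inl rfl) hsub
      · exact main _ (Or.inr rfl) hsub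
    · intro p h1 h2 hside
      show gg (rho k p) = x₀
      have hb1 : p.1 / k ≤ m := by
        calc p.1 / k ≤ (k * m) / k := Nat.div_le_div_right h1
        _ = m := Nat.mul_div_cancel_left m hk
      have hb2 : p.2 / k ≤ n := by
        calc p.2 / k ≤ (k * n) / k := Nat.div_le_div_right h2
        _ = n := Nat.mul_div_cancel_left n hk
      refine hgg.2 (rho k p) hb1 hb2 ?_
      rcases hside with hh | hh | hh | hh
      · exact Or.inl (by show p.1 / k = 0; rw [hh]; exact Nat.zero_div k)
      · exact Or.inr (Or.inl (by show p.1 / k = m; rw [hh]; exact Nat.mul_div_cancel_left m hk))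
      · exact Or.inr (Or.inr (Or.inl (by show p.2 / k = 0; rw [hh]; exact Nat.zero_div k)))
      · exact Or.inr (Or.inr (Or.inr
          (by show p.2 / k = n; rw [hh]; exact Nat.mul_div_cancel_left n hk)))
  have hcontig0 : Contiguous (gridComplex (k * m) (k * n)) X (g ∘ rho k) (φ 0) := by
    intro s hs
    obtain ⟨i, j, hi, hj, hsub⟩ := hs
    have main : ∀ Tri : Finset (ℕ × ℕ),
        (Tri = {(i, j), (i + 1, j), (i + 1, j + 1)} ∨
          Tri = {(i, j), (i, j + 1), (i + 1, j + 1)}) → s ⊆ Tri →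
        s.image (g ∘ rho k) ∪ s.image (φ 0) ∈ X.faces := by
      intro Tri hT hsub'
      obtain ⟨Fc, hFc, hφm, hg0, -⟩ :=
        htest i j hi hj Tri hT 0 0 (by omega) (by omega) (Or.inl rfl)
      refine X.down_closed hFc (Finset.union_subset ?_ ?_)
      · intro v hv
        obtain ⟨w, hw, rfl⟩ := Finset.mem_image.1 hv
        exact hg0 rfl w (hsub' hw)
      · intro v hv
        obtain ⟨w, hw, rfl⟩ := Finset.mem_image.1 hv
        exact (hφm w (hsub' hw)).1
    rcases hsub with hsub | hsub
    · exact main _ (Or.inl rfl) hsub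
    · exact main _ (Or.inr rfl) hsub
  have hcontigk : Contiguous (gridComplex (k * m) (k * n)) X (φ k) (g' ∘ rho k) := by
    intro s hs
    obtain ⟨i, j, hi, hj, hsub⟩ := hs
    have main : ∀ Tri : Finset (ℕ × ℕ),
        (Tri = {(i, j), (i + 1, j), (i + 1, j + 1)} ∨
          Tri = {(i, j), (i, j + 1), (i + 1, j + 1)}) → s ⊆ Tri →
        s.image (φ k) ∪ s.image (g' ∘ rho k) ∈ X.faces := by
      intro Tri hT hsub'
      obtain ⟨Fc, hFc, hφm, -, hgk⟩ :=
        htest i j hi hj Tri hT k k le_rfl le_rfl (Or.inl rfl)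
      refine X.down_closed hFc (Finset.union_subset ?_ ?_)
      · intro v hv
        obtain ⟨w, hw, rfl⟩ := Finset.mem_image.1 hv
        exact (hφm w (hsub' hw)).1
      · intro v hv
        obtain ⟨w, hw, rfl⟩ := Finset.mem_image.1 hv
        exact hgk rfl w (hsub' hw)
    rcases hsub with hsub | hsub
    · exact main _ (Or.inl rfl) hsub
    · exact main _ (Or.inr rfl) hsub
  -- assemble the chain
  refine ⟨k, hk2, ?_⟩
  have hchain : ∀ l : ℕ, l ≤ k →
      Relation.ReflTransGen (fun a b =>
        IsGridSphere X x₀ (k * m) (k * n) a ∧ IsGridSphere X x₀ (k * m) (k * n) b ∧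
          Contiguous (gridComplex (k * m) (k * n)) X a b) (g ∘ rho k) (φ l) := by
    intro l
    induction l with
    | zero =>
        intro _
        exact Relation.ReflTransGen.single
          ⟨hsphere_comp g hg, hsphereφ 0 (by omega), hcontig0⟩
    | succ l ih =>
        intro hl1
        exact Relation.ReflTransGen.tail (ih (by omega))
          ⟨hsphereφ l (by omega), hsphereφ (l + 1) hl1, hcontigφ l hl1⟩
  exact Relation.ReflTransGen.tail (hchain k le_rfl)
    ⟨hsphereφ k le_rfl, hsphere_comp g' hg', hcontigk⟩
end
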